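/- Let G be a cyclic group of order n ≥ 2 and S a sequence over G of length |S| = 2n−2 with 0 ∉ Σ_n(S). Then S = g^{n−1} h^{n−1} for some g, h ∈ G with ord(g − h) = n. -/

import Mathlib

set_option linter.unusedSectionVars false
set_option linter.unusedVariables false
set_option maxHeartbeats 1600000

open Multiset Pointwise

namespace EGZProofAux

section Helpers
variable {α : Type*} [DecidableEq α] {β : Type*} [DecidableEq β]

lemma exists_le_card {W : Multiset α} {k : ℕ} (h : k ≤ Multiset.card W) :
    ∃ Z ≤ W, Multiset.card Z = k := by
  induction W using Multiset.induction generalizing k with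
  | empty =>
    simp only [Multiset.card_zero, Nat.le_zero] at h
    exact ⟨0, le_rfl, by simp [h]⟩
  | cons a s ih =>
    cases k with
    | zero => exact ⟨0, Multiset.zero_le _, rfl⟩
    | succ k =>
      obtain ⟨Z, hZ, hc⟩ := ih (k := k) (by simpa using h)
      exact ⟨a ::ₘ Z, Multiset.cons_le_cons a hZ, by simp [hc]⟩

lemma exists_of_le_map {f : α → β} {S : Multiset α} :
    ∀ {T' : Multiset β}, T' ≤ S.map f → ∃ T ≤ S, T.map f = T' := by
  induction S using Multiset.induction with
  | empty =>
    intro T' h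
    simp only [Multiset.map_zero, Multiset.le_zero] at h
    exact ⟨0, le_rfl, by simp [h]⟩
  | cons a s ih =>
    intro T' h
    by_cases hm : f a ∈ T'
    · have h2 : T'.erase (f a) ≤ s.map f := by
        have := Multiset.erase_le_erase (f a) h
        simpa using this
      obtain ⟨T, hT, hTm⟩ := ih h2
      refine ⟨a ::ₘ T, Multiset.cons_le_cons a hT, ?_⟩
      rw [Multiset.map_cons, hTm, Multiset.cons_erase hm]
    · have h2 : T' ≤ s.map f := by
        rw [Multiset.le_iff_count] at h ⊢
        intro b
        rcases eq_or_ne b (f a) with rfl | hb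
        · simp [Multiset.count_eq_zero_of_notMem hm]
        · have := h b
          simpa [Multiset.map_cons, Multiset.count_cons, hb] using this
      obtain ⟨T, hT, hTm⟩ := ih h2
      exact ⟨T, le_trans hT (Multiset.le_cons_self _ _), hTm⟩

lemma le_sum_of_mem {C : Multiset (Multiset α)} {B : Multiset α} (h : B ∈ C) : B ≤ C.sum := by
  rw [← Multiset.cons_erase h, Multiset.sum_cons]
  exact Multiset.le_add_right _ _

lemma mem_sum_iff {C : Multiset (Multiset α)} {x : α} : x ∈ C.sum ↔ ∃ B ∈ C, x ∈ B := by
  induction C using Multiset.induction with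
  | empty => simp
  | cons B C ih => simp [ih]

lemma add_le_of_le_sub {T U S : Multiset α} (hU : U ≤ S) (hT : T ≤ S - U) : T + U ≤ S := by
  rw [Multiset.le_iff_count] at *
  intro a
  have h1 := hT a
  have h2 := hU a
  rw [Multiset.count_sub] at h1
  simp only [Multiset.count_add]
  omega

lemma card_sub_of_le {U S : Multiset α} (hU : U ≤ S) :
    Multiset.card (S - U) = Multiset.card S - Multiset.card U := by
  have h := tsub_add_cancel_of_le hU
  have h2 := congrArg Multiset.card h
  rw [Multiset.card_add] at h2
  omega

lemma exists_partition {p : ℕ} (hp : 0 < p) :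
    ∀ {k : ℕ} {W : Multiset α}, Multiset.card W = p * k →
    ∃ C : Multiset (Multiset α), Multiset.card C = k ∧ (∀ B ∈ C, Multiset.card B = p) ∧ C.sum = W := by
  intro k
  induction k with
  | zero =>
    intro W h
    simp only [Nat.mul_zero, Multiset.card_eq_zero] at h
    exact ⟨0, rfl, by simp, by simp [h]⟩
  | succ k ih =>
    intro W h
    have hmul : p * (k+1) = p * k + p := by ring
    obtain ⟨Z, hZ, hZc⟩ := exists_le_card (W := W) (k := p) (by omega)
    obtain ⟨C, hC1, hC2, hC3⟩ := ih (W := W - Z) (by rw [card_sub_of_le hZ]; omega)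
    refine ⟨Z ::ₘ C, by simp [hC1], ?_, ?_⟩
    · intro B hB
      rcases Multiset.mem_cons.mp hB with rfl | hB
      · exact hZc
      · exact hC2 B hB
    · rw [Multiset.sum_cons, hC3]
      exact add_tsub_cancel_of_le hZ

lemma sum_le_sum_of_le {C D : Multiset (Multiset α)} (h : D ≤ C) : D.sum ≤ C.sum := by
  obtain ⟨E, rfl⟩ := Multiset.le_iff_exists_add.mp h
  rw [Multiset.sum_add]
  exact Multiset.le_add_right _ _

lemma map_sub_of_le {f : α → β} {U S : Multiset α} (h : U ≤ S) :
    (S - U).map f = S.map f - U.map f := by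
  have h2 := tsub_add_cancel_of_le h
  have h3 : (S - U).map f + U.map f = S.map f := by
    rw [← Multiset.map_add, h2]
  rw [← h3, add_tsub_cancel_right]


end Helpers

lemma count_replicate_ne {α : Type*} [DecidableEq α] {u v : α} {k : ℕ} (huv : u ≠ v) :
    Multiset.count u (Multiset.replicate k v) = 0 :=
  Multiset.count_eq_zero.mpr (fun hm => huv (Multiset.eq_of_mem_replicate hm))

lemma count_two_of_all {α : Type*} [DecidableEq α] {s : Multiset α} {x y : α} (hxy : x ≠ y)
    (h : ∀ b ∈ s, b = x ∨ b = y) :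
    Multiset.count x s + Multiset.count y s = Multiset.card s := by
  induction s using Multiset.induction with
  | empty => simp
  | cons a s ih =>
    have ih' := ih (fun b hb => h b (Multiset.mem_cons_of_mem hb))
    rcases h a (Multiset.mem_cons_self _ _) with rfl | rfl
    · rw [Multiset.count_cons_self, Multiset.count_cons_of_ne (fun hh => hxy hh.symm),
        Multiset.card_cons]
      omega
    · rw [Multiset.count_cons_self, Multiset.count_cons_of_ne hxy, Multiset.card_cons]
      omega

lemma card_msum {α : Type*} {p : ℕ} {C : Multiset (Multiset α)}
    (h : ∀ B ∈ C, Multiset.card B = p) :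
    Multiset.card C.sum = p * Multiset.card C := by
  induction C using Multiset.induction with
  | empty => simp
  | cons B C ih =>
    rw [Multiset.sum_cons, Multiset.card_add,
      ih (fun B' hB' => h B' (Multiset.mem_cons_of_mem hB')),
      h B (Multiset.mem_cons_self _ _), Multiset.card_cons]
    ring

lemma sum_msum {α : Type*} [AddCommMonoid α] {C : Multiset (Multiset α)} :
    C.sum.sum = (C.map Multiset.sum).sum := by
  induction C using Multiset.induction with
  | empty => simp
  | cons B C ih => simp [Multiset.sum_cons, ih]

lemma two_val_multiset {α : Type*} [DecidableEq α] {s : Multiset α} {a b : α} (hab : a ≠ b)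
    (hcard : Multiset.count a s + Multiset.count b s = Multiset.card s) :
    s = Multiset.replicate (Multiset.count a s) a + Multiset.replicate (Multiset.count b s) b := by
  have hle : Multiset.replicate (Multiset.count a s) a
      + Multiset.replicate (Multiset.count b s) b ≤ s := by
    rw [Multiset.le_iff_count]
    intro y
    rw [Multiset.count_add]
    by_cases hya : y = a
    · rw [hya, Multiset.count_replicate_self, count_replicate_ne hab]
      omega
    · by_cases hyb : y = b
      · rw [hyb, Multiset.count_replicate_self, count_replicate_ne (fun h => hab h.symm)]
        omega
      · rw [count_replicate_ne hya, count_replicate_ne hyb]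
        omega
  have := Multiset.eq_of_le_of_card_le hle (by
    rw [Multiset.card_add, Multiset.card_replicate, Multiset.card_replicate]
    omega)
  exact this.symm

lemma all_eq_multiset {α : Type*} [DecidableEq α] {s : Multiset α} {a : α}
    (hcard : Multiset.count a s = Multiset.card s) :
    ∀ b ∈ s, b = a := by
  intro b hb
  by_contra hba
  have h2 : b ::ₘ Multiset.replicate (Multiset.count a s) a ≤ s := by
    rw [Multiset.le_iff_count]
    intro y
    rw [Multiset.count_cons]
    by_cases hya : y = a
    · rw [hya, Multiset.count_replicate_self]
      have hab : ¬ (a = b) := fun h => hba h.symm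
      simp [hab]
    · rw [count_replicate_ne hya]
      by_cases hyb : y = b
      · subst hyb
        have := Multiset.count_pos.mpr hb
        simp
        omega
      · simp [hyb]
  have := Multiset.card_le_card h2
  rw [Multiset.card_cons, Multiset.card_replicate] at this
  omega

lemma const_sum_multiset {α : Type*} [AddCommMonoid α] {s : Multiset α} {a : α}
    (h : ∀ b ∈ s, b = a) : s.sum = (Multiset.card s) • a := by
  have : s = Multiset.replicate (Multiset.card s) a := Multiset.eq_replicate.mpr ⟨rfl, h⟩
  rw [this, Multiset.sum_replicate, Multiset.card_replicate]


section Pairs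
variable {α : Type*} [AddCommGroup α] [DecidableEq α]

def pairMS (pr : α × α) : Multiset α := {pr.1, pr.2}

lemma card_pairMS (pr : α × α) : Multiset.card (pairMS pr) = 2 := rfl

def choiceSums : List (α × α) → Finset α
  | [] => {0}
  | pr :: l => ({pr.1, pr.2} : Finset α) + choiceSums l

lemma choiceSums_nonempty (l : List (α × α)) : (choiceSums l).Nonempty := by
  induction l with
  | nil => exact ⟨0, by simp [choiceSums]⟩
  | cons pr l ih => exact Finset.Nonempty.add (by simp) ih

lemma choiceSums_perm {l l' : List (α × α)} (h : l.Perm l') : choiceSums l = choiceSums l' := by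
  induction h with
  | nil => rfl
  | cons x h ih => simp [choiceSums, ih]
  | swap x y l =>
    show ({y.1, y.2} : Finset α) + (({x.1, x.2} : Finset α) + choiceSums l)
        = ({x.1, x.2} : Finset α) + (({y.1, y.2} : Finset α) + choiceSums l)
    rw [← add_assoc, ← add_assoc, add_comm ({y.1, y.2} : Finset α) ({x.1, x.2} : Finset α)]
  | trans h1 h2 ih1 ih2 => rw [ih1, ih2]

lemma choiceSums_realize {l : List (α × α)} {w : α} (hw : w ∈ choiceSums l) :
    ∃ T ≤ (l.map pairMS).sum, Multiset.card T = l.length ∧ T.sum = w := by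
  induction l generalizing w with
  | nil =>
    simp only [choiceSums, Finset.mem_singleton] at hw
    exact ⟨0, le_rfl, rfl, by simp [hw]⟩
  | cons pr l ih =>
    rw [choiceSums, Finset.mem_add] at hw
    obtain ⟨e, he, w', hw', rfl⟩ := hw
    obtain ⟨T, hT, hTc, hTs⟩ := ih hw'
    have hepair : (e ::ₘ 0 : Multiset α) ≤ pairMS pr := by
      simp only [Finset.mem_insert, Finset.mem_singleton] at he
      have hps : pairMS pr = pr.1 ::ₘ pr.2 ::ₘ 0 := by
        simp [pairMS]
      rcases he with rfl | rfl
      · rw [hps]; exact Multiset.cons_le_cons _ (Multiset.zero_le _)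
      · rw [hps, Multiset.cons_swap]
        exact Multiset.cons_le_cons _ (Multiset.zero_le _)
    refine ⟨e ::ₘ T, ?_, by simp [hTc], by simp [hTs]⟩
    have : (e ::ₘ T : Multiset α) = (e ::ₘ 0) + T := by simp
    rw [this, List.map_cons, List.sum_cons]
    exact add_le_add hepair hT

lemma choiceSums_card {p : ℕ} (hp : p.Prime) (l : List (ZMod p × ZMod p))
    (hl : ∀ pr ∈ l, pr.1 ≠ pr.2) :
    min p (l.length + 1) ≤ (choiceSums l).card := by
  induction l with
  | nil => simp [choiceSums]
  | cons pr l ih =>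
    have h1 : pr.1 ≠ pr.2 := hl pr (by simp)
    have ih' := ih (fun qr hqr => hl qr (by simp [hqr]))
    have hcd := ZMod.cauchy_davenport hp (s := ({pr.1, pr.2} : Finset (ZMod p)))
      (t := choiceSums l) (by simp) (choiceSums_nonempty l)
    rw [Finset.card_pair h1] at hcd
    show min p (l.length + 1 + 1) ≤ (({pr.1, pr.2} : Finset (ZMod p)) + choiceSums l).card
    have := (choiceSums_nonempty (α := ZMod p) l).card_pos
    omega

lemma pair_add_pair_card {p : ℕ} [Fact p.Prime] {a b c e : ZMod p} (hab : a ≠ b) (hce : c ≠ e)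
    (h1 : e - c ≠ b - a) (h2 : e - c ≠ a - b) :
    4 ≤ (({a, b} : Finset (ZMod p)) + ({c, e} : Finset (ZMod p))).card := by
  have hsub : ({a + c, a + e, b + c, b + e} : Finset (ZMod p)) ⊆ ({a, b} : Finset (ZMod p)) + {c, e} := by
    intro x hx
    simp only [Finset.mem_insert, Finset.mem_singleton] at hx
    rw [Finset.mem_add]
    rcases hx with rfl | rfl | rfl | rfl
    · exact ⟨a, by simp, c, by simp, rfl⟩
    · exact ⟨a, by simp, e, by simp, rfl⟩
    · exact ⟨b, by simp, c, by simp, rfl⟩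
    · exact ⟨b, by simp, e, by simp, rfl⟩
  refine le_trans (le_of_eq ?_) (Finset.card_le_card hsub)
  have d1 : a + c ≠ a + e := by intro h; exact hce (by linear_combination h)
  have d2 : a + c ≠ b + c := by intro h; exact hab (by linear_combination h)
  have d3 : a + c ≠ b + e := by intro h; exact h2 (by linear_combination -h)
  have d4 : a + e ≠ b + c := by intro h; exact h1 (by linear_combination h)
  have d5 : a + e ≠ b + e := by intro h; exact hab (by linear_combination h)
  have d6 : b + c ≠ b + e := by intro h; exact hce (by linear_combination h)
  rw [Finset.card_insert_of_notMem (by simp [d1, d2, d3]),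
      Finset.card_insert_of_notMem (by simp [d4, d5]),
      Finset.card_insert_of_notMem (by simp [d6]), Finset.card_singleton]


end Pairs

section Pairing
variable {α : Type*} [AddCommGroup α] [DecidableEq α]

lemma exists_pairing :
    ∀ (m : ℕ) (S : Multiset α), Multiset.card S = 2*m → (∀ a, S.count a ≤ m) →
    ∃ l : List (α × α), (∀ pr ∈ l, pr.1 ≠ pr.2) ∧ l.length = m ∧ (l.map pairMS).sum = S := by
  intro m
  induction m with
  | zero =>
    intro S hc _
    have : S = 0 := by rw [← Multiset.card_eq_zero]; omega
    exact ⟨[], by simp, rfl, by simp [this]⟩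
  | succ m ih =>
    intro S hc hcount
    have htf : S.toFinset.Nonempty := by
      rw [Multiset.toFinset_nonempty]
      intro h; rw [h] at hc; simp at hc
    obtain ⟨a, haf, hamax⟩ := S.toFinset.exists_max_image (fun x => S.count x) htf
    have haS : a ∈ S := Multiset.mem_toFinset.mp haf
    have hb : ∃ b ∈ S, b ≠ a := by
      by_contra hforall
      push_neg at hforall
      have hrep : S = Multiset.replicate (S.count a) a := by
        ext x
        rw [Multiset.count_replicate]
        by_cases hxa : x = a
        · rw [hxa, if_pos rfl]
        · rw [if_neg (fun h => hxa h.symm), Multiset.count_eq_zero]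
          intro hxS
          exact hxa (hforall x hxS)
      have hcrep := congrArg Multiset.card hrep
      rw [Multiset.card_replicate] at hcrep
      have := hcount a
      omega
    obtain ⟨b, hbS, hba⟩ := hb
    set S' := (S.erase a).erase b with hS'
    have hbea : b ∈ S.erase a := (Multiset.mem_erase_of_ne hba).mpr hbS
    have hrec : S = a ::ₘ b ::ₘ S' := by
      rw [hS', Multiset.cons_erase hbea, Multiset.cons_erase haS]
    have hcard' : Multiset.card S' = 2*m := by
      have := congrArg Multiset.card hrec
      simp only [Multiset.card_cons] at this
      omega
    have hcount' : ∀ x, S'.count x ≤ m := by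
      intro x
      have hxS := hcount x
      have hle : S'.count x ≤ S.count x :=
        Multiset.count_le_of_le x (le_trans (Multiset.erase_le _ _) (Multiset.erase_le _ _))
      by_cases hxa : x = a
      · rw [hxa]
        have h2 : S'.count a = (S.erase a).count a := by
          rw [hS']
          exact Multiset.count_erase_of_ne (fun h => hba h.symm) _
        have h3 : (S.erase a).count a = S.count a - 1 := Multiset.count_erase_self a S
        have := hcount a
        omega
      · by_cases hxb : x = b
        · rw [hxb]
          have h2 : (S.erase a).count b = S.count b := Multiset.count_erase_of_ne hba _
          have h3 : S'.count b = (S.erase a).count b - 1 := by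
            rw [hS']
            exact Multiset.count_erase_self b (S.erase a)
          have := hcount b
          omega
        · have h2 : S'.count x = S.count x := by
            rw [hS', Multiset.count_erase_of_ne hxb, Multiset.count_erase_of_ne hxa]
          by_contra hgt
          push_neg at hgt
          have hxcount : S.count x = m + 1 := by omega
          have hxmem : x ∈ S := by rw [← Multiset.count_pos]; omega
          have hax := hamax x (Multiset.mem_toFinset.mpr hxmem)
          try simp only at hax
          have hca := hcount a
          have hacount : S.count a = m + 1 := by omega
          have hsub : Multiset.replicate (m+1) x + Multiset.replicate (m+1) a ≤ S := by
            rw [Multiset.le_iff_count]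
            intro y
            rw [Multiset.count_add]
            by_cases hya : y = a
            · have hyx : y ≠ x := by rw [hya]; exact fun h => hxa h.symm
              rw [count_replicate_ne hyx, hya, Multiset.count_replicate_self]
              omega
            · by_cases hyx : y = x
              · rw [hyx, Multiset.count_replicate_self, count_replicate_ne hxa]
                omega
              · rw [count_replicate_ne hyx, count_replicate_ne hya]
                omega
          have hcc : Multiset.card S ≤ Multiset.card
              (Multiset.replicate (m+1) x + Multiset.replicate (m+1) a) := by
            rw [Multiset.card_add, Multiset.card_replicate, Multiset.card_replicate]; omega
          have hSeq : Multiset.replicate (m+1) x + Multiset.replicate (m+1) a = S :=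
            Multiset.eq_of_le_of_card_le hsub hcc
          have hbmem : b = x ∨ b = a := by
            have hbS2 := hbS
            rw [← hSeq] at hbS2
            rcases Multiset.mem_add.mp hbS2 with h | h
            · exact Or.inl (Multiset.eq_of_mem_replicate h)
            · exact Or.inr (Multiset.eq_of_mem_replicate h)
          rcases hbmem with h | h
          · exact hxb h.symm
          · exact hba h
    obtain ⟨l, h1, h2, h3⟩ := ih S' hcard' hcount'
    refine ⟨(a, b) :: l, ?_, by simp [h2], ?_⟩
    · intro pr hpr
      rcases List.mem_cons.mp hpr with rfl | hpr
      · exact fun h => hba h.symm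
      · exact h1 pr hpr
    · rw [List.map_cons, List.sum_cons, h3, hrec]
      show ({a, b} : Multiset α) + S' = a ::ₘ b ::ₘ S'
      rw [Multiset.insert_eq_cons, Multiset.cons_add, Multiset.singleton_add]


end Pairing

section PrimeCase

variable {p : ℕ} {S : Multiset (ZMod p)} {l : List (ZMod p × ZMod p)}

lemma hkey_lemma (hp2 : 2 ≤ p)
    (h0 : ¬ ∃ T ≤ S, Multiset.card T = p ∧ T.sum = 0)
    (hlen : l.length = p - 1)
    (hsum : (l.map pairMS).sum = S) :
    ∀ pr M, l.Perm (pr :: M) → ∀ w ∈ choiceSums M, pr.1 + pr.2 + w ≠ 0 := by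
  intro pr M hperm w hw heq
  obtain ⟨T, hT, hTc, hTs⟩ := choiceSums_realize hw
  apply h0
  have hMlen : M.length = p - 2 := by
    have := hperm.length_eq
    simp at this; omega
  refine ⟨pr.1 ::ₘ pr.2 ::ₘ T, ?_, ?_, ?_⟩
  · have hsum2 : (l.map pairMS).sum = pairMS pr + (M.map pairMS).sum := by
      rw [List.Perm.sum_eq (hperm.map pairMS)]
      simp
    rw [← hsum, hsum2]
    have heq2 : (pr.1 ::ₘ pr.2 ::ₘ T : Multiset (ZMod p)) = (pr.1 ::ₘ pr.2 ::ₘ 0) + T := by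
      simp
    rw [heq2]
    refine add_le_add (le_of_eq ?_) hT
    show (pr.1 ::ₘ pr.2 ::ₘ 0 : Multiset (ZMod p)) = {pr.1, pr.2}
    rfl
  · simp [hTc, hMlen]; omega
  · simp only [Multiset.sum_cons, hTs]
    rw [← add_assoc]; exact heq

lemma hCS_lemma (hp : p.Prime) (hp2 : 2 ≤ p)
    (h0 : ¬ ∃ T ≤ S, Multiset.card T = p ∧ T.sum = 0)
    (hlne : ∀ pr ∈ l, pr.1 ≠ pr.2)
    (hlen : l.length = p - 1)
    (hsum : (l.map pairMS).sum = S) :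
    ∀ pr M, l.Perm (pr :: M) → (choiceSums M).card = p - 1 := by
  intro pr M hperm
  haveI : Fact p.Prime := ⟨hp⟩
  haveI : NeZero p := ⟨by omega⟩
  have hMlen : M.length = p - 2 := by
    have := hperm.length_eq; simp at this; omega
  have hge := choiceSums_card hp M (fun qr hqr => hlne qr (hperm.mem_iff.mpr (by simp [hqr])))
  rw [hMlen] at hge
  have hnot : -(pr.1 + pr.2) ∉ choiceSums M := by
    intro hmem
    exact hkey_lemma hp2 h0 hlen hsum pr M hperm _ hmem (by ring)
  have hle : (choiceSums M).card ≤ p - 1 := by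
    have hsub : choiceSums M ⊆ Finset.univ.erase (-(pr.1 + pr.2)) := by
      intro z hz
      rw [Finset.mem_erase]
      exact ⟨fun h => hnot (h ▸ hz), Finset.mem_univ z⟩
    calc (choiceSums M).card ≤ (Finset.univ.erase (-(pr.1 + pr.2))).card :=
          Finset.card_le_card hsub
      _ = p - 1 := by
          rw [Finset.card_erase_of_mem (Finset.mem_univ _), Finset.card_univ, ZMod.card]
  omega

lemma rigidity (hp : p.Prime) (hp5 : 5 ≤ p)
    (h0 : ¬ ∃ T ≤ S, Multiset.card T = p ∧ T.sum = 0)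
    (hlne : ∀ pr ∈ l, pr.1 ≠ pr.2)
    (hlen : l.length = p - 1)
    (hsum : (l.map pairMS).sum = S) :
    ∀ qr ir M, l.Perm (qr :: ir :: M) →
      ir.2 - ir.1 = qr.2 - qr.1 ∨ ir.2 - ir.1 = -(qr.2 - qr.1) := by
  haveI : Fact p.Prime := ⟨hp⟩
  intro qr ir M hperm0
  have hMlen : M.length = p - 3 := by
    have h1 := hperm0.length_eq
    rw [hlen] at h1
    simp at h1
    omega
  have hMne : M ≠ [] := by
    intro h; rw [h] at hMlen; simp at hMlen; omega
  obtain ⟨pr, M3, hM3⟩ := List.exists_cons_of_ne_nil hMne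
  rw [hM3] at hperm0
  -- l ~ pr :: qr :: ir :: M3
  have hperm : l.Perm (pr :: qr :: ir :: M3) := by
    refine hperm0.trans ?_
    have s1 : (qr :: ir :: pr :: M3).Perm (qr :: pr :: ir :: M3) :=
      List.Perm.cons qr (List.Perm.swap pr ir M3)
    have s2 : (qr :: pr :: ir :: M3).Perm (pr :: qr :: ir :: M3) :=
      List.Perm.swap pr qr (ir :: M3)
    exact s1.trans s2
  have hqrl : qr.1 ≠ qr.2 := hlne qr (hperm.mem_iff.mpr (by simp))
  have hirl : ir.1 ≠ ir.2 := hlne ir (hperm.mem_iff.mpr (by simp))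
  by_contra hcon
  push_neg at hcon
  obtain ⟨hc1, hc2⟩ := hcon
  -- card of pair sumset ≥ 4
  have h4 : 4 ≤ (({qr.1, qr.2} : Finset (ZMod p)) + ({ir.1, ir.2} : Finset (ZMod p))).card := by
    apply pair_add_pair_card hqrl hirl
    · exact fun h => hc1 (by linear_combination h)
    · exact fun h => hc2 (by linear_combination h)
  -- choiceSums (qr :: ir :: M3) has card p - 1
  have hcs := hCS_lemma hp (by omega) h0 hlne hlen hsum pr (qr :: ir :: M3) hperm
  -- lower bound via CD
  have hM3 : ∀ x ∈ M3, x.1 ≠ x.2 := fun x hx => hlne x (hperm.mem_iff.mpr (by simp [hx]))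
  have hM3card := choiceSums_card hp M3 hM3
  have hM3len : M3.length = p - 4 := by
    have := hperm.length_eq; simp at this; omega
  rw [hM3len] at hM3card
  have hassoc : choiceSums (qr :: ir :: M3)
      = (({qr.1, qr.2} : Finset (ZMod p)) + ({ir.1, ir.2} : Finset (ZMod p))) + choiceSums M3 := by
    show ({qr.1, qr.2} : Finset (ZMod p)) + (({ir.1, ir.2} : Finset (ZMod p)) + choiceSums M3) = _
    rw [add_assoc]
  have hcd := ZMod.cauchy_davenport hp
    (s := ({qr.1, qr.2} : Finset (ZMod p)) + ({ir.1, ir.2} : Finset (ZMod p)))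
    (t := choiceSums M3)
    (Finset.Nonempty.add (by simp) (by simp)) (choiceSums_nonempty M3)
  rw [← hassoc, hcs] at hcd
  -- hcd : min p (card A + card CS M3 - 1) ≤ p - 1, card A ≥ 4, card CS M3 ≥ min p (p-3)
  omega

end PrimeCase

section PrimeMain
variable {α : Type*} [AddCommGroup α] [DecidableEq α]

lemma exists_perm_cons {γ : Type*} [DecidableEq γ] {x : γ} {l : List γ} (h : x ∈ l) :
    ∃ M, l.Perm (x :: M) := ⟨_, List.perm_cons_erase h⟩

lemma mem_choiceSums_of_uniform {d : α} :
    ∀ {M : List (α × α)}, (∀ qr ∈ M, qr.2 = qr.1 + d) →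
    ∀ j, j ≤ M.length → (M.map Prod.fst).sum + j • d ∈ choiceSums M := by
  intro M
  induction M with
  | nil =>
    intro _ j hj
    have hj0 : j = 0 := by simpa using hj
    subst hj0
    simp [choiceSums]
  | cons qr M ih =>
    intro hM j hj
    show _ ∈ ({qr.1, qr.2} : Finset α) + choiceSums M
    have hM' : ∀ x ∈ M, x.2 = x.1 + d := fun x hx => hM x (by simp [hx])
    rcases Nat.eq_zero_or_pos j with rfl | hjpos
    · rw [Finset.mem_add]
      refine ⟨qr.1, by simp, (M.map Prod.fst).sum + 0 • d, ih hM' 0 (by omega), ?_⟩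
      simp
    · rw [Finset.mem_add]
      refine ⟨qr.2, by simp, (M.map Prod.fst).sum + (j-1) • d, ih hM' (j-1) (by simp at hj; omega), ?_⟩
      rw [hM qr (by simp), List.map_cons, List.sum_cons]
      have hjd : (j - 1) • d + d = j • d := by
        rw [← succ_nsmul]
        congr 1
        omega
      rw [← hjd]
      abel

lemma base_eq {p : ℕ} (hp : p.Prime) {d base : ZMod p} (hd : d ≠ 0)
    (h : ∀ j : ℕ, j ≤ p - 2 → base + j • d ≠ 0) : base = d := by
  haveI : Fact p.Prime := ⟨hp⟩
  haveI : NeZero p := ⟨hp.ne_zero⟩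
  have hp2 := hp.two_le
  set j0 := ((-base) * d⁻¹).val with hj0
  have hj0lt : j0 < p := ZMod.val_lt _
  have hsum : base + j0 • d = 0 := by
    rw [nsmul_eq_mul, hj0, ZMod.natCast_val, ZMod.cast_id, mul_assoc,
      ZMod.inv_mul_of_unit d (Ne.isUnit hd)]
    ring
  have hj0ge : ¬ (j0 ≤ p - 2) := fun hle => h j0 hle hsum
  have hj0eq : j0 = p - 1 := by omega
  rw [hj0eq] at hsum
  have hpd : ((p-1) : ℕ) • d = -d := by
    have hcast : ((p-1 : ℕ) : ZMod p) = -1 := by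
      rw [Nat.cast_sub (by omega), ZMod.natCast_self, Nat.cast_one]
      ring
    rw [nsmul_eq_mul, hcast]
    ring
  rw [hpd] at hsum
  linear_combination hsum

lemma sum_pairs_const {g h : α} :
    ∀ (L : List (α × α)), (∀ pr ∈ L, pr = (g, h)) →
      (L.map pairMS).sum = Multiset.replicate L.length g + Multiset.replicate L.length h := by
  intro L
  induction L with
  | nil => simp
  | cons x L ihL =>
    intro hall
    rw [List.map_cons, List.sum_cons, ihL (fun y hy => hall y (by simp [hy])), hall x (by simp)]
    show pairMS (g, h) + _ = _
    ext z
    simp [pairMS, Multiset.count_cons, Multiset.count_replicate, List.length_cons,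
      Multiset.insert_eq_cons]
    by_cases hzg : z = g <;> by_cases hzh : z = h <;> simp [hzg, hzh] <;> omega

lemma uniform_case {p : ℕ} (hp : p.Prime) (hp2 : 2 ≤ p) {S : Multiset (ZMod p)}
    {l : List (ZMod p × ZMod p)}
    (h0 : ¬ ∃ T ≤ S, Multiset.card T = p ∧ T.sum = 0)
    (hllen : l.length = p - 1)
    (hlsum : (l.map pairMS).sum = S)
    {d : ZMod p} (hd0 : d ≠ 0) (hld : ∀ pr ∈ l, pr.2 = pr.1 + d) :
    ∃ g h : ZMod p, S = Multiset.replicate (p-1) g + Multiset.replicate (p-1) h := by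
  haveI : Fact p.Prime := ⟨hp⟩
  have hprs : ∀ pr ∈ l, pr = (-(l.map Prod.fst).sum, d - (l.map Prod.fst).sum) := by
    intro pr hpr
    obtain ⟨M, hperm⟩ := exists_perm_cons hpr
    have hkey := hkey_lemma hp2 h0 hllen hlsum pr M hperm
    have helen : M.length = p - 2 := by
      have := hperm.length_eq
      rw [hllen] at this
      simp at this
      omega
    have h5 : (l.map Prod.fst).sum = pr.1 + (M.map Prod.fst).sum := by
      have := (hperm.map Prod.fst).sum_eq
      rw [List.map_cons, List.sum_cons] at this
      exact this
    have hbase : ∀ j : ℕ, j ≤ p - 2 → (pr.2 + (l.map Prod.fst).sum) + j • d ≠ 0 := by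
      intro j hj heq
      have hmem := mem_choiceSums_of_uniform (M := M)
        (fun x hx => hld x (hperm.mem_iff.mpr (List.mem_cons_of_mem pr hx))) j (by omega)
      refine hkey _ hmem ?_
      rw [← heq, h5]
      ring
    have h2 : pr.2 + (l.map Prod.fst).sum = d := base_eq hp hd0 hbase
    have h1 : pr.1 + (l.map Prod.fst).sum = 0 := by
      have h3 := hld pr hpr
      linear_combination h2 - h3
    have e1 : pr.1 = -(l.map Prod.fst).sum := by linear_combination h1
    have e2 : pr.2 = d - (l.map Prod.fst).sum := by linear_combination h2
    exact Prod.ext_iff.mpr ⟨e1, e2⟩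
  refine ⟨-(l.map Prod.fst).sum, d - (l.map Prod.fst).sum, ?_⟩
  rw [← hlsum, sum_pairs_const l hprs, hllen]

theorem prime_case {p : ℕ} (hp : p.Prime) (hp5 : 5 ≤ p) {S : Multiset (ZMod p)}
    (hS : Multiset.card S = 2*p - 2)
    (h0 : ¬ ∃ T ≤ S, Multiset.card T = p ∧ T.sum = 0) :
    ∃ g h : ZMod p, S = Multiset.replicate (p-1) g + Multiset.replicate (p-1) h := by
  haveI : Fact p.Prime := ⟨hp⟩
  have hcount : ∀ a, S.count a ≤ p - 1 := by
    intro a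
    by_contra hlt
    push_neg at hlt
    apply h0
    refine ⟨Multiset.replicate p a, ?_, by simp, ?_⟩
    · rw [← Multiset.le_count_iff_replicate_le]
      omega
    · rw [Multiset.sum_replicate, nsmul_eq_mul, ZMod.natCast_self, zero_mul]
  obtain ⟨l, hlne, hllen, hlsum⟩ := exists_pairing (p-1) S (by omega) hcount
  have hlnil : l ≠ [] := by
    intro h
    rw [h] at hllen
    simp at hllen
    omega
  have hh0 : l.head hlnil ∈ l := List.head_mem hlnil
  have hd0 : (l.head hlnil).2 - (l.head hlnil).1 ≠ 0 :=
    sub_ne_zero.mpr (Ne.symm (hlne _ hh0))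
  set d := (l.head hlnil).2 - (l.head hlnil).1 with hd
  have hdiffs : ∀ pr ∈ l, pr.2 - pr.1 = d ∨ pr.2 - pr.1 = -d := by
    intro pr hpr
    by_cases hpe : pr = l.head hlnil
    · left
      rw [hpe]
    · obtain ⟨M, hpermA⟩ := exists_perm_cons hh0
      have hprM : pr ∈ M := by
        have := hpermA.mem_iff.mp hpr
        rcases List.mem_cons.mp this with h | h
        · exact absurd h hpe
        · exact h
      obtain ⟨M', hpermB⟩ := exists_perm_cons hprM
      exact rigidity hp hp5 h0 hlne hllen hlsum _ pr M'
        (hpermA.trans (List.Perm.cons _ hpermB))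
  set l₂ := l.map (fun pr => if pr.2 - pr.1 = d then pr else (pr.2, pr.1)) with hl₂
  have hl₂len : l₂.length = p - 1 := by
    rw [hl₂, List.length_map, hllen]
  have hl₂sum : (l₂.map pairMS).sum = S := by
    rw [hl₂, List.map_map]
    have hfun : (pairMS ∘ fun pr : ZMod p × ZMod p =>
        if pr.2 - pr.1 = d then pr else (pr.2, pr.1)) = pairMS := by
      funext pr
      simp only [Function.comp_apply]
      split_ifs
      · rfl
      · show ({pr.2, pr.1} : Multiset (ZMod p)) = {pr.1, pr.2}
        rw [Multiset.pair_comm]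
    rw [hfun, hlsum]
  have hl₂d : ∀ pr ∈ l₂, pr.2 = pr.1 + d := by
    intro pr hpr
    rw [hl₂] at hpr
    obtain ⟨qr, hqr, rfl⟩ := List.mem_map.mp hpr
    split_ifs with hcase
    · linear_combination hcase
    · rcases hdiffs qr hqr with hh | hh
      · exact absurd hh hcase
      · show qr.1 = qr.2 + d
        linear_combination -hh
  exact uniform_case hp (by omega) h0 hl₂len hl₂sum hd0 hl₂d


end PrimeMain

lemma zmod_nsmul_self {n : ℕ} (x : ZMod n) : n • x = 0 := by
  rw [nsmul_eq_mul]
  simp [ZMod.natCast_self]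

lemma endgame {n : ℕ} (hn : 2 ≤ n) (g h : ZMod n)
    (h0 : ¬ ∃ T ≤ (Multiset.replicate (n-1) g + Multiset.replicate (n-1) h),
      Multiset.card T = n ∧ T.sum = 0) :
    addOrderOf (g - h) = n := by
  have hdvd : addOrderOf (g - h) ∣ n := addOrderOf_dvd_of_nsmul_eq_zero (zmod_nsmul_self _)
  set o := addOrderOf (g - h) with ho
  have hopos : 0 < o := by
    rcases Nat.eq_zero_or_pos o with h0' | h
    · exfalso; rw [h0'] at hdvd; have := Nat.eq_zero_of_zero_dvd hdvd; omega
    · exact h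
  by_contra hne
  have holt : o < n := lt_of_le_of_ne (Nat.le_of_dvd (by omega) hdvd) hne
  apply h0
  refine ⟨Multiset.replicate o g + Multiset.replicate (n-o) h, ?_, ?_, ?_⟩
  · exact add_le_add ((Multiset.replicate_le_replicate g).mpr (by omega))
      ((Multiset.replicate_le_replicate h).mpr (by omega))
  · rw [Multiset.card_add, Multiset.card_replicate, Multiset.card_replicate]; omega
  · rw [Multiset.sum_add, Multiset.sum_replicate, Multiset.sum_replicate]
    have hsplit : (n - o) • h + o • h = n • h := by rw [← add_nsmul]; congr 1; omega
    have heq : o • g + (n - o) • h = o • (g - h) + ((n - o) • h + o • h) := by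
      rw [smul_sub]; abel
    rw [heq, hsplit, zmod_nsmul_self, addOrderOf_nsmul_eq_zero]
    simp

section Iota

variable {p q n : ℕ}

def iotaF (p n : ℕ) : ℤ →+ ZMod n := (zmultiplesHom (ZMod n)) ((p : ZMod n))

lemma iotaF_q (hn : n = p * q) : iotaF p n (q : ℤ) = 0 := by
  show (q : ℤ) • ((p : ZMod n)) = 0
  rw [zsmul_eq_mul, Int.cast_natCast, ← Nat.cast_mul,
    show q * p = n by rw [hn]; ring, ZMod.natCast_self]

noncomputable def iota (hn : n = p * q) : ZMod q →+ ZMod n :=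
  ZMod.lift q ⟨iotaF p n, iotaF_q hn⟩

lemma iota_natCast (hn : n = p * q) (k : ℕ) :
    iota hn ((k : ℕ) : ZMod q) = ((k * p : ℕ) : ZMod n) := by
  have h1 : ((k : ℕ) : ZMod q) = ((k : ℤ) : ZMod q) := by push_cast; rfl
  rw [h1]
  rw [iota, ZMod.lift_coe]
  show (k : ℤ) • ((p : ZMod n)) = _
  rw [zsmul_eq_mul, Int.cast_natCast, ← Nat.cast_mul]

lemma iota_injective (hp : 1 ≤ p) (hq : 1 ≤ q) (hn : n = p * q) :
    Function.Injective (iota hn) := by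
  haveI : NeZero q := ⟨by omega⟩
  haveI : NeZero n := ⟨by simp [hn]; omega⟩
  rw [injective_iff_map_eq_zero]
  intro γ hγ
  have hval : ((γ.val : ℕ) : ZMod q) = γ := ZMod.natCast_rightInverse γ
  rw [← hval, iota_natCast hn] at hγ
  rw [ZMod.natCast_eq_zero_iff] at hγ
  rw [← hval]
  rw [ZMod.natCast_eq_zero_iff]
  rw [hn] at hγ
  have hpq : p * q = q * p := by ring
  rw [hpq] at hγ
  exact (Nat.mul_dvd_mul_iff_right (by omega : 0 < p)).mp hγ

lemma iota_surj_ker (hp : 1 ≤ p) (hq : 1 ≤ q) (hn : n = p * q) (c : ZMod n)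
    (hc : ZMod.castHom (show p ∣ n from Dvd.intro q hn.symm) (ZMod p) c = 0) :
    ∃ γ : ZMod q, iota hn γ = c := by
  haveI : NeZero n := ⟨by simp [hn]; omega⟩
  haveI : NeZero p := ⟨by omega⟩
  have hval : ((c.val : ℕ) : ZMod n) = c := ZMod.natCast_rightInverse c
  have hcast : ((c.val : ℕ) : ZMod p) = 0 := by
    have : ZMod.castHom (show p ∣ n from Dvd.intro q hn.symm) (ZMod p) ((c.val : ℕ) : ZMod n)
        = ((c.val : ℕ) : ZMod p) := by
      rw [map_natCast]
    rw [← this, hval, hc]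
  rw [ZMod.natCast_eq_zero_iff] at hcast
  obtain ⟨k, hk⟩ := hcast
  refine ⟨(k : ZMod q), ?_⟩
  rw [iota_natCast hn, ← hval, hk]
  congr 1
  ring

lemma iota_ker (hp : 1 ≤ p) (hq : 1 ≤ q) (hn : n = p * q) (γ : ZMod q) :
    ZMod.castHom (show p ∣ n from Dvd.intro q hn.symm) (ZMod p) (iota hn γ) = 0 := by
  haveI : NeZero q := ⟨by omega⟩
  have hval : ((γ.val : ℕ) : ZMod q) = γ := ZMod.natCast_rightInverse γ
  rw [← hval, iota_natCast hn, map_natCast, Nat.cast_mul]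
  simp [ZMod.natCast_self]

lemma exists_preimage_multiset (hp : 1 ≤ p) (hq : 1 ≤ q) (hn : n = p * q)
    (E : Multiset (ZMod n))
    (hE : ∀ c ∈ E, ZMod.castHom (show p ∣ n from Dvd.intro q hn.symm) (ZMod p) c = 0) :
    ∃ E' : Multiset (ZMod q), E'.map (iota hn) = E := by
  induction E using Multiset.induction with
  | empty => exact ⟨0, by simp⟩
  | cons c E ih =>
    obtain ⟨E', hE'⟩ := ih (fun d hd => hE d (Multiset.mem_cons_of_mem hd))
    obtain ⟨γ, hγ⟩ := iota_surj_ker hp hq hn c (hE c (Multiset.mem_cons_self _ _))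
    exact ⟨γ ::ₘ E', by rw [Multiset.map_cons, hE', hγ]⟩


end Iota

def IsConfig {p q n : ℕ} (hn : n = p * q) (S : Multiset (ZMod n))
    (C : Multiset (Multiset (ZMod n))) (L : Multiset (ZMod n)) : Prop :=
  C.sum + L = S ∧ Multiset.card C = 2*q - 2 ∧
    ∀ B ∈ C, Multiset.card B = p ∧
      ZMod.castHom (show p ∣ n from Dvd.intro q hn.symm) (ZMod p) B.sum = 0

lemma phi_msum {p q n : ℕ} (hn : n = p * q) (B : Multiset (ZMod n)) :
    (B.map (ZMod.castHom (show p ∣ n from Dvd.intro q hn.symm) (ZMod p))).sum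
      = ZMod.castHom (show p ∣ n from Dvd.intro q hn.symm) (ZMod p) B.sum :=
  (map_multiset_sum _ _).symm

lemma contra_blocks {p q n : ℕ} (hp : p.Prime) (hq : 2 ≤ q) (hn : n = p * q)
    {S : Multiset (ZMod n)}
    (h0 : ¬ ∃ T ≤ S, Multiset.card T = n ∧ T.sum = 0)
    (W : Multiset (Multiset (ZMod n)))
    (hW : ∀ B ∈ W, Multiset.card B = p ∧
      ZMod.castHom (show p ∣ n from Dvd.intro q hn.symm) (ZMod p) B.sum = 0)
    (hWle : W.sum ≤ S) (hWcard : 2*q - 1 ≤ Multiset.card W) : False := by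
  have hp1 : 1 ≤ p := hp.pos
  have hq1 : 1 ≤ q := by omega
  obtain ⟨E', hE'⟩ := exists_preimage_multiset hp1 hq1 hn (W.map Multiset.sum)
    (by
      intro c hc
      obtain ⟨B, hB, rfl⟩ := Multiset.mem_map.mp hc
      exact (hW B hB).2)
  have hE'card : 2*q - 1 ≤ Multiset.card E' := by
    have := congrArg Multiset.card hE'
    rw [Multiset.card_map, Multiset.card_map] at this
    omega
  obtain ⟨D', hD'le, hD'card, hD'sum⟩ := ZMod.erdos_ginzburg_ziv_multiset E' hE'card
  have hDle : D'.map (iota hn) ≤ W.map Multiset.sum := by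
    rw [← hE']
    exact Multiset.map_le_map hD'le
  obtain ⟨F, hFle, hFmap⟩ := exists_of_le_map hDle
  apply h0
  refine ⟨F.sum, le_trans (sum_le_sum_of_le hFle) hWle, ?_, ?_⟩
  · rw [card_msum (fun B hB => (hW B (Multiset.mem_of_le hFle hB)).1)]
    have hq' : Multiset.card F = q := by
      have := congrArg Multiset.card hFmap
      rw [Multiset.card_map, Multiset.card_map] at this
      omega
    rw [hq', hn]
  · rw [sum_msum, hFmap, ← AddMonoidHom.map_multiset_sum, hD'sum]
    simp

lemma config_exists {p q n : ℕ} (hp : p.Prime) (hq : 2 ≤ q) (hn : n = p * q)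
    {S : Multiset (ZMod n)} (hS : Multiset.card S = 2*n - 2) :
    ∃ C L, IsConfig hn S C L := by
  have hp1 : 0 < p := hp.pos
  have hkey : ∀ k, k ≤ 2*q - 2 → ∃ C : Multiset (Multiset (ZMod n)),
      Multiset.card C = k ∧
      (∀ B ∈ C, Multiset.card B = p ∧
        ZMod.castHom (show p ∣ n from Dvd.intro q hn.symm) (ZMod p) B.sum = 0) ∧
      C.sum ≤ S := by
    intro k
    induction k with
    | zero => exact fun _ => ⟨0, rfl, by simp, by simp⟩
    | succ k ih =>
      intro hk
      obtain ⟨C, hCcard, hCB, hCle⟩ := ih (by omega)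
      have hCsum : Multiset.card C.sum = p * k := by
        rw [card_msum (fun B hB => (hCB B hB).1), hCcard]
      have hmul1 : p * (k+1) ≤ p * (2*q-2) := Nat.mul_le_mul_left p hk
      have hmul2 : p * (k+1) = p*k + p := by ring
      have hmul3 : p * (2*q-2) + p*2 = p*(2*q) := by
        rw [← Nat.mul_add]
        congr 1
        omega
      have hmul4 : p*(2*q) = 2*(p*q) := by ring
      have hrem : 2*p - 1 ≤ Multiset.card (S - C.sum) := by
        rw [card_sub_of_le hCle, hS, hCsum, ← hn] at *
        omega
      obtain ⟨T', hT'le, hT'card, hT'sum⟩ := ZMod.erdos_ginzburg_ziv_multiset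
        ((S - C.sum).map (ZMod.castHom (show p ∣ n from Dvd.intro q hn.symm) (ZMod p)))
        (by rw [Multiset.card_map]; exact hrem)
      obtain ⟨B, hBle, hBmap⟩ := exists_of_le_map hT'le
      refine ⟨B ::ₘ C, by simp [hCcard], ?_, ?_⟩
      · intro B' hB'
        rcases Multiset.mem_cons.mp hB' with rfl | hB'
        · constructor
          · have := congrArg Multiset.card hBmap
            rw [Multiset.card_map] at this
            omega
          · rw [← phi_msum hn, hBmap, hT'sum]
        · exact hCB B' hB'
      · rw [Multiset.sum_cons]
        exact add_le_of_le_sub hCle hBle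
  obtain ⟨C, hCcard, hCB, hCle⟩ := hkey (2*q-2) le_rfl
  exact ⟨C, S - C.sum, add_tsub_cancel_of_le hCle, hCcard, hCB⟩

lemma config_leftover_card {p q n : ℕ} (hp : p.Prime) (hq : 2 ≤ q) (hn : n = p * q)
    {S : Multiset (ZMod n)} (hS : Multiset.card S = 2*n - 2)
    {C L} (hC : IsConfig hn S C L) : Multiset.card L = 2*p - 2 := by
  obtain ⟨hsum, hcard, hB⟩ := hC
  have h1 : Multiset.card C.sum = p * (2*q-2) := by
    rw [card_msum (fun B hB' => (hB B hB').1), hcard]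
  have h2 := congrArg Multiset.card hsum
  rw [Multiset.card_add, h1, hS] at h2
  have hmul3 : p * (2*q-2) + p*2 = p*(2*q) := by
    rw [← Nat.mul_add]
    congr 1
    omega
  have hmul4 : p*(2*q) = 2*(p*q) := by ring
  have hp1 : 0 < p := hp.pos
  rw [← hn] at *
  omega

lemma leftover_struct {p q n : ℕ} (hp : p.Prime) (hq : 2 ≤ q) (hn : n = p * q)
    {S : Multiset (ZMod n)} (hS : Multiset.card S = 2*n - 2)
    (h0 : ¬ ∃ T ≤ S, Multiset.card T = n ∧ T.sum = 0)
    (IHp : ∀ (S' : Multiset (ZMod p)), Multiset.card S' = 2*p-2 →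
      (¬ ∃ T ≤ S', Multiset.card T = p ∧ T.sum = 0) →
      ∃ x y, S' = Multiset.replicate (p-1) x + Multiset.replicate (p-1) y ∧
        addOrderOf (x - y) = p)
    {C L} (hC : IsConfig hn S C L) :
    ∃ x y, L.map (ZMod.castHom (show p ∣ n from Dvd.intro q hn.symm) (ZMod p))
        = Multiset.replicate (p-1) x + Multiset.replicate (p-1) y ∧ x ≠ y := by
  obtain ⟨hsum, hcard, hB⟩ := hC
  have hno : ¬ ∃ T ≤ L.map (ZMod.castHom (show p ∣ n from Dvd.intro q hn.symm) (ZMod p)),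
      Multiset.card T = p ∧ T.sum = 0 := by
    rintro ⟨T', hT'le, hT'card, hT'sum⟩
    obtain ⟨T, hTle, hTmap⟩ := exists_of_le_map hT'le
    refine contra_blocks hp hq hn h0 (T ::ₘ C) ?_ ?_ ?_
    · intro B hBm
      rcases Multiset.mem_cons.mp hBm with rfl | hBm
      · constructor
        · have := congrArg Multiset.card hTmap
          rw [Multiset.card_map] at this
          omega
        · rw [← phi_msum hn, hTmap, hT'sum]
      · exact hB B hBm
    · rw [Multiset.sum_cons, add_comm T C.sum, ← hsum]
      exact add_le_add le_rfl hTle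
    · simp [hcard]
      omega
  obtain ⟨x, y, hxy, hord⟩ := IHp _
    (by rw [Multiset.card_map]
        exact config_leftover_card hp hq hn hS ⟨hsum, hcard, hB⟩) hno
  refine ⟨x, y, hxy, ?_⟩
  intro hxyeq
  rw [hxyeq, sub_self, addOrderOf_zero] at hord
  have := hp.two_le
  omega

lemma blocks_struct {p q n : ℕ} (hp : p.Prime) (hq : 2 ≤ q) (hn : n = p * q)
    {S : Multiset (ZMod n)}
    (h0 : ¬ ∃ T ≤ S, Multiset.card T = n ∧ T.sum = 0)
    (IHq : ∀ (S' : Multiset (ZMod q)), Multiset.card S' = 2*q-2 →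
      (¬ ∃ T ≤ S', Multiset.card T = q ∧ T.sum = 0) →
      ∃ a b, S' = Multiset.replicate (q-1) a + Multiset.replicate (q-1) b ∧
        addOrderOf (a - b) = q)
    {C L} (hC : IsConfig hn S C L) :
    ∃ (γs : Multiset (ZMod q)) (α β : ZMod q),
      γs.map (iota hn) = C.map Multiset.sum ∧
      γs = Multiset.replicate (q-1) α + Multiset.replicate (q-1) β ∧
      addOrderOf (α - β) = q := by
  have hp1 : 1 ≤ p := hp.pos
  have hq1 : 1 ≤ q := by omega
  obtain ⟨hsum, hcard, hB⟩ := hC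
  obtain ⟨γs, hγs⟩ := exists_preimage_multiset hp1 hq1 hn (C.map Multiset.sum)
    (by
      intro c hc
      obtain ⟨B, hBm, rfl⟩ := Multiset.mem_map.mp hc
      exact (hB B hBm).2)
  have hγcard : Multiset.card γs = 2*q - 2 := by
    have := congrArg Multiset.card hγs
    rw [Multiset.card_map, Multiset.card_map] at this
    omega
  have hno : ¬ ∃ T ≤ γs, Multiset.card T = q ∧ T.sum = 0 := by
    rintro ⟨D', hD'le, hD'card, hD'sum⟩
    have hDle : D'.map (iota hn) ≤ C.map Multiset.sum := by
      rw [← hγs]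
      exact Multiset.map_le_map hD'le
    obtain ⟨F, hFle, hFmap⟩ := exists_of_le_map hDle
    apply h0
    refine ⟨F.sum,
      le_trans (sum_le_sum_of_le hFle) (by rw [← hsum]; exact Multiset.le_add_right _ _),
      ?_, ?_⟩
    · rw [card_msum (fun B hBm => (hB B (Multiset.mem_of_le hFle hBm)).1)]
      have hcF : Multiset.card F = q := by
        have := congrArg Multiset.card hFmap
        rw [Multiset.card_map, Multiset.card_map] at this
        omega
      rw [hcF, hn]
    · rw [sum_msum, hFmap, ← AddMonoidHom.map_multiset_sum, hD'sum]
      simp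
  obtain ⟨α, β, hstruct, hord⟩ := IHq γs hγcard hno
  exact ⟨γs, α, β, hγs, hstruct, hord⟩


lemma psm1 {p : ℕ} (hp : 2 ≤ p) (w : ZMod p) : (p-1 : ℕ) • w = -w := by
  haveI : NeZero p := ⟨by omega⟩
  rw [nsmul_eq_mul, Nat.cast_sub (by omega), ZMod.natCast_self, Nat.cast_one]
  ring

lemma shape_count {q : ℕ} {α β w : ZMod q} (hab : α ≠ β) :
    Multiset.count w (Multiset.replicate (q-1) α + Multiset.replicate (q-1) β) = 0 ∨
    Multiset.count w (Multiset.replicate (q-1) α + Multiset.replicate (q-1) β) = q - 1 := by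
  rw [Multiset.count_add]
  by_cases hwa : w = α
  · rw [hwa, Multiset.count_replicate_self, count_replicate_ne hab]
    right; omega
  · rw [count_replicate_ne hwa]
    by_cases hwb : w = β
    · rw [hwb, Multiset.count_replicate_self]
      right; omega
    · rw [count_replicate_ne hwb]
      left; omega

lemma RIG {q : ℕ} (hq : 2 ≤ q) {e e' : ZMod q} {r : Multiset (ZMod q)}
    {α β α' β' : ZMod q}
    (h1 : e ::ₘ r = Multiset.replicate (q-1) α + Multiset.replicate (q-1) β)
    (ho1 : addOrderOf (α - β) = q)
    (h2 : e' ::ₘ r = Multiset.replicate (q-1) α' + Multiset.replicate (q-1) β')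
    (ho2 : addOrderOf (α' - β') = q) :
    e = e' := by
  have hab : α ≠ β := by
    intro h; rw [h, sub_self, addOrderOf_zero] at ho1; omega
  have hab' : α' ≠ β' := by
    intro h; rw [h, sub_self, addOrderOf_zero] at ho2; omega
  rcases eq_or_lt_of_le hq with hq2 | hq3
  · -- q = 2
    have hq2' : q = 2 := hq2.symm
    subst hq2'
    have hsum1 := congrArg Multiset.sum h1
    have hsum2 := congrArg Multiset.sum h2
    rw [Multiset.sum_cons, Multiset.sum_add, Multiset.sum_replicate, Multiset.sum_replicate]
      at hsum1 hsum2
    have hdec : ∀ (a b a' b' : ZMod 2), a ≠ b → a' ≠ b' → a + b = a' + b' := by decide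
    simp only [show (2-1 : ℕ) = 1 from rfl, one_nsmul] at hsum1 hsum2
    rw [← hdec α β α' β' hab hab', ← hsum1] at hsum2
    exact (add_right_cancel hsum2).symm
  · -- q ≥ 3
    by_contra hee
    have hc1 : Multiset.count e' (e ::ₘ r) = Multiset.count e' r :=
      Multiset.count_cons_of_ne (fun h => hee h.symm) r
    have hc2 : Multiset.count e' (e' ::ₘ r) = Multiset.count e' r + 1 :=
      Multiset.count_cons_self e' r
    have hs1 := shape_count (w := e') hab
    have hs2 := shape_count (w := e') hab'
    rw [← h1, hc1] at hs1
    rw [← h2, hc2] at hs2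
    omega


theorem junk_free {p q n : ℕ} (hp : p.Prime) (hq : 2 ≤ q) (hn : n = p * q)
    {S : Multiset (ZMod n)}
    (hS : Multiset.card S = 2*n - 2)
    (h0 : ¬ ∃ T ≤ S, Multiset.card T = n ∧ T.sum = 0)
    (IHp : ∀ (S' : Multiset (ZMod p)), Multiset.card S' = 2*p-2 →
      (¬ ∃ T ≤ S', Multiset.card T = p ∧ T.sum = 0) →
      ∃ x y, S' = Multiset.replicate (p-1) x + Multiset.replicate (p-1) y ∧
        addOrderOf (x - y) = p)
    {C0 : Multiset (Multiset (ZMod n))} {L0 : Multiset (ZMod n)} {x y : ZMod p}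
    (hC0 : IsConfig hn S C0 L0)
    (hL0 : L0.map (ZMod.castHom (show p ∣ n from Dvd.intro q hn.symm) (ZMod p))
      = Multiset.replicate (p-1) x + Multiset.replicate (p-1) y)
    (hxy : x ≠ y) :
    ∀ s ∈ S, ZMod.castHom (show p ∣ n from Dvd.intro q hn.symm) (ZMod p) s = x ∨
      ZMod.castHom (show p ∣ n from Dvd.intro q hn.symm) (ZMod p) s = y := by
  set φ := ZMod.castHom (show p ∣ n from Dvd.intro q hn.symm) (ZMod p) with hφ
  intro s hs
  by_contra hcon
  push_neg at hcon
  obtain ⟨hzx, hzy⟩ := hcon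
  have hp2 : 2 ≤ p := hp.two_le
  obtain ⟨hsum, hcard, hBp⟩ := hC0
  -- s is not in L0
  have hsL0 : s ∉ L0 := by
    intro hmem
    have : φ s ∈ L0.map φ := Multiset.mem_map_of_mem φ hmem
    rw [hL0] at this
    rcases Multiset.mem_add.mp this with h | h
    · exact hzx (Multiset.eq_of_mem_replicate h)
    · exact hzy (Multiset.eq_of_mem_replicate h)
  -- s is in some block
  have hsC : s ∈ C0.sum := by
    have : s ∈ C0.sum + L0 := by rw [hsum]; exact hs
    rcases Multiset.mem_add.mp this with h | h
    · exact h
    · exact absurd h hsL0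
  obtain ⟨B₀, hB₀, hsB₀⟩ := mem_sum_iff.mp hsC
  -- build the new configuration
  have hMcards : Multiset.card (B₀ + L0) = 3*p - 2 := by
    rw [Multiset.card_add, (hBp B₀ hB₀).1, config_leftover_card hp hq hn hS ⟨hsum, hcard, hBp⟩]
    omega
  have hsM : s ∈ B₀ + L0 := Multiset.mem_add.mpr (Or.inl hsB₀)
  have hMercard : 2*p - 1 ≤ Multiset.card (((B₀ + L0).erase s).map φ) := by
    rw [Multiset.card_map, Multiset.card_erase_of_mem hsM, hMcards, Nat.pred_eq_sub_one]
    omega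
  obtain ⟨T', hT'le, hT'card, hT'sum⟩ := ZMod.erdos_ginzburg_ziv_multiset _ hMercard
  obtain ⟨B', hB'le, hB'map⟩ := exists_of_le_map hT'le
  have hB'M : B' ≤ B₀ + L0 := le_trans hB'le (Multiset.erase_le s _)
  have hB'card : Multiset.card B' = p := by
    have := congrArg Multiset.card hB'map
    rw [Multiset.card_map] at this
    omega
  have hB'sum : φ B'.sum = 0 := by
    rw [← phi_msum hn, hB'map, hT'sum]
  have hC0split : C0.sum = B₀ + (C0.erase B₀).sum := by
    conv_lhs => rw [← Multiset.cons_erase hB₀]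
    rw [Multiset.sum_cons]
  have hC1 : IsConfig hn S (B' ::ₘ C0.erase B₀) ((B₀ + L0) - B') := by
    refine ⟨?_, ?_, ?_⟩
    · rw [Multiset.sum_cons]
      have h1 : B' + ((B₀ + L0) - B') = B₀ + L0 := add_tsub_cancel_of_le hB'M
      have h2 : B' + (C0.erase B₀).sum + ((B₀ + L0) - B')
          = (C0.erase B₀).sum + (B' + ((B₀ + L0) - B')) := by
        rw [add_comm B' ((C0.erase B₀).sum), add_assoc]
      rw [h2, h1, ← add_assoc, add_comm ((C0.erase B₀).sum) B₀, ← hC0split, hsum]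
    · rw [Multiset.card_cons, Multiset.card_erase_of_mem hB₀, hcard, Nat.pred_eq_sub_one]
      omega
    · intro B hB
      rcases Multiset.mem_cons.mp hB with rfl | hB
      · exact ⟨hB'card, hB'sum⟩
      · exact hBp B (Multiset.mem_of_mem_erase hB)
  -- s survives in the new leftover
  have hcntB' : Multiset.count s B' ≤ Multiset.count s (B₀ + L0) - 1 := by
    have h1 : Multiset.count s B' ≤ Multiset.count s ((B₀ + L0).erase s) :=
      Multiset.count_le_of_le s hB'le
    rw [Multiset.count_erase_self] at h1
    omega
  have hsL1 : s ∈ (B₀ + L0) - B' := by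
    rw [← Multiset.count_pos, Multiset.count_sub]
    have := Multiset.count_pos.mpr hsM
    omega
  -- structure of the new leftover
  obtain ⟨x₁, y₁, hL1map, hx₁y₁⟩ := leftover_struct hp hq hn hS h0 IHp hC1
  have hzmem : φ s ∈ ((B₀ + L0) - B').map φ := Multiset.mem_map_of_mem φ hsL1
  -- t : the other class of L1
  have hΦt : ∃ t, t ≠ φ s ∧ ((B₀ + L0) - B').map φ
      = Multiset.replicate (p-1) (φ s) + Multiset.replicate (p-1) t := by
    rw [hL1map] at hzmem
    rcases Multiset.mem_add.mp hzmem with h | h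
    · have hzx₁ : φ s = x₁ := Multiset.eq_of_mem_replicate h
      refine ⟨y₁, fun hh => hx₁y₁ (hzx₁.symm.trans hh.symm), ?_⟩
      rw [hL1map, hzx₁]
    · have hzy₁ : φ s = y₁ := Multiset.eq_of_mem_replicate h
      refine ⟨x₁, fun hh => hx₁y₁ (hh.trans hzy₁), ?_⟩
      rw [hL1map, hzy₁, add_comm]
  obtain ⟨t, htz, hL1s⟩ := hΦt
  -- counting
  have hMφ : (B₀ + L0).map φ = B₀.map φ + L0.map φ := Multiset.map_add φ _ _
  have hcntzL0 : Multiset.count (φ s) (L0.map φ) = 0 := by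
    rw [hL0, Multiset.count_add, count_replicate_ne hzx, count_replicate_ne hzy]
  have hL1φ : ((B₀ + L0) - B').map φ = (B₀ + L0).map φ - B'.map φ := map_sub_of_le hB'M
  have hcntzL1 : Multiset.count (φ s) (((B₀ + L0) - B').map φ) = p - 1 := by
    rw [hL1s, Multiset.count_add, Multiset.count_replicate_self,
      count_replicate_ne (fun h => htz h.symm)]
    omega
  have hcnt_eq : ∀ w : ZMod p, Multiset.count w (((B₀ + L0) - B').map φ)
      = Multiset.count w ((B₀ + L0).map φ) - Multiset.count w (B'.map φ) := by
    intro w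
    rw [hL1φ, Multiset.count_sub]
  have hcntzM : Multiset.count (φ s) ((B₀ + L0).map φ) = Multiset.count (φ s) (B₀.map φ) := by
    rw [hMφ, Multiset.count_add, hcntzL0]
    omega
  have hcardB₀φ : Multiset.card (B₀.map φ) = p := by
    rw [Multiset.card_map, (hBp B₀ hB₀).1]
  -- count of z in B₀ is full
  have hcntzB₀ : Multiset.count (φ s) (B₀.map φ) = p := by
    have hle : Multiset.count (φ s) (B₀.map φ) ≤ p :=
      le_trans (Multiset.count_le_card _ _) (le_of_eq hcardB₀φ)
    by_contra hlt
    have hzeq := hcnt_eq (φ s)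
    rw [hcntzL1, hcntzM] at hzeq
    have hcB : Multiset.count (φ s) (B₀.map φ) = p - 1 ∧ Multiset.count (φ s) (B'.map φ) = 0 := by
      constructor <;> omega
    -- B₀φ = replicate (p-1) z + {w}
    obtain ⟨hcB1, hcB2⟩ := hcB
    have hrep_le : Multiset.replicate (p-1) (φ s) ≤ B₀.map φ :=
      Multiset.le_count_iff_replicate_le.mp (by omega)
    have hWcard : Multiset.card (B₀.map φ - Multiset.replicate (p-1) (φ s)) = 1 := by
      rw [card_sub_of_le hrep_le, hcardB₀φ, Multiset.card_replicate]
      omega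
    obtain ⟨w, hw⟩ := Multiset.card_eq_one.mp hWcard
    have hdecomp : B₀.map φ = Multiset.replicate (p-1) (φ s) + {w} := by
      rw [← hw]
      exact (add_tsub_cancel_of_le hrep_le).symm
    have hwz : w ≠ φ s := by
      intro hweq
      have : Multiset.count (φ s) (B₀.map φ) = p - 1 + 1 := by
        rw [hdecomp, Multiset.count_add, Multiset.count_replicate_self, hweq,
          Multiset.count_singleton_self]
      omega
    have hsum0 : (B₀.map φ).sum = 0 := by
      rw [phi_msum hn, (hBp B₀ hB₀).2]
    rw [hdecomp, Multiset.sum_add, Multiset.sum_replicate, Multiset.sum_singleton] at hsum0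
    rw [psm1 hp2] at hsum0
    exact hwz (by linear_combination hsum0)
  -- all of B₀φ is z
  have hallz : ∀ b ∈ B₀.map φ, b = φ s :=
    all_eq_multiset (by rw [hcntzB₀, hcardB₀φ])
  -- count z in B' is 1
  have hcntzB' : Multiset.count (φ s) (B'.map φ) = 1 := by
    have hzeq := hcnt_eq (φ s)
    rw [hcntzL1, hcntzM, hcntzB₀] at hzeq
    have hle : Multiset.count (φ s) (B'.map φ) ≤ p := by
      have h1 : Multiset.card (B'.map φ) = p := by rw [Multiset.card_map, hB'card]
      exact le_trans (Multiset.count_le_card _ _) (le_of_eq h1)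
    -- also count z B'φ ≤ count z Mφ = p, and p - 1 = p - count
    have hge : 1 ≤ Multiset.count (φ s) (B'.map φ) := by omega
    omega
  -- t is in {x, y}
  have hcnttL1 : Multiset.count t (((B₀ + L0) - B').map φ) = p - 1 := by
    rw [hL1s, Multiset.count_add, Multiset.count_replicate_self, count_replicate_ne htz]
    omega
  have hcnttB₀ : Multiset.count t (B₀.map φ) = 0 := by
    rw [Multiset.count_eq_zero]
    intro hmem
    exact htz (hallz t hmem)
  have hcnttM : Multiset.count t ((B₀ + L0).map φ) = Multiset.count t (L0.map φ) := by
    rw [hMφ, Multiset.count_add, hcnttB₀]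
    omega
  have hcnttL0 : 1 ≤ Multiset.count t (L0.map φ) := by
    have := hcnt_eq t
    rw [hcnttL1, hcnttM] at this
    omega
  have htxy : t = x ∨ t = y := by
    have : t ∈ L0.map φ := Multiset.count_pos.mp (by omega)
    rw [hL0] at this
    rcases Multiset.mem_add.mp this with h | h
    · exact Or.inl (Multiset.eq_of_mem_replicate h)
    · exact Or.inr (Multiset.eq_of_mem_replicate h)
  -- u : the other element of {x, y}
  obtain ⟨u, hut, huxy⟩ : ∃ u, u ≠ t ∧ (u = x ∨ u = y) := by
    rcases htxy with rfl | rfl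
    · exact ⟨y, fun h => hxy h.symm, Or.inr rfl⟩
    · exact ⟨x, hxy, Or.inl rfl⟩
  have huz : u ≠ φ s := by
    rcases huxy with rfl | rfl
    · exact fun h => hzx h.symm
    · exact fun h => hzy h.symm
  have hcntuL1 : Multiset.count u (((B₀ + L0) - B').map φ) = 0 := by
    rw [hL1s, Multiset.count_add, count_replicate_ne huz, count_replicate_ne hut]
  have hcntuL0 : Multiset.count u (L0.map φ) = p - 1 := by
    rcases huxy with rfl | rfl
    · rw [hL0, Multiset.count_add, Multiset.count_replicate_self, count_replicate_ne hxy]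
      omega
    · rw [hL0, Multiset.count_add, Multiset.count_replicate_self,
        count_replicate_ne (fun h => hxy h.symm)]
      omega
  have hcntuB₀ : Multiset.count u (B₀.map φ) = 0 := by
    rw [Multiset.count_eq_zero]
    intro hmem
    exact huz (hallz u hmem)
  have hcntuM : Multiset.count u ((B₀ + L0).map φ) = p - 1 := by
    rw [hMφ, Multiset.count_add, hcntuB₀, hcntuL0]
    omega
  have hcntuB' : Multiset.count u (B'.map φ) = p - 1 := by
    have := hcnt_eq u
    rw [hcntuL1, hcntuM] at this
    have hle : Multiset.count u (B'.map φ) + Multiset.count (φ s) (B'.map φ)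
        ≤ Multiset.card (B'.map φ) := by
      have hb : Multiset.replicate (Multiset.count u (B'.map φ)) u
          + Multiset.replicate (Multiset.count (φ s) (B'.map φ)) (φ s) ≤ B'.map φ := by
        rw [Multiset.le_iff_count]
        intro w
        rw [Multiset.count_add]
        by_cases hwu : w = u
        · rw [hwu, Multiset.count_replicate_self, count_replicate_ne huz]
          omega
        · by_cases hwz : w = φ s
          · rw [hwz, Multiset.count_replicate_self, count_replicate_ne (fun h => huz h.symm)]
            omega
          · rw [count_replicate_ne hwu, count_replicate_ne hwz]
            omega
      have := Multiset.card_le_card hb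
      rw [Multiset.card_add, Multiset.card_replicate, Multiset.card_replicate] at this
      omega
    have hcardB' : Multiset.card (B'.map φ) = p := by rw [Multiset.card_map, hB'card]
    omega
  -- B'φ is {z} + replicate (p-1) u
  have hcnt_sum : Multiset.count u (B'.map φ) + Multiset.count (φ s) (B'.map φ)
      = Multiset.card (B'.map φ) := by
    rw [hcntuB', hcntzB', Multiset.card_map, hB'card]
    omega
  have hB'decomp := two_val_multiset huz hcnt_sum
  rw [hcntuB', hcntzB'] at hB'decomp
  have hsum0 : (B'.map φ).sum = 0 := by
    rw [phi_msum hn, hB'sum]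
  rw [hB'decomp, Multiset.sum_add, Multiset.sum_replicate, Multiset.sum_replicate,
    psm1 hp2, one_nsmul] at hsum0
  -- -u + z = 0 i.e. z = u, contradiction
  have : φ s = u := by linear_combination hsum0
  exact huz this.symm


lemma pure_block_sum {p q n : ℕ} (hn : n = p * q) {B : Multiset (ZMod n)} {c : ZMod p}
    (hall : ∀ b ∈ B, ZMod.castHom (show p ∣ n from Dvd.intro q hn.symm) (ZMod p) b = c)
    (hcard : Multiset.card B = p) :
    ZMod.castHom (show p ∣ n from Dvd.intro q hn.symm) (ZMod p) B.sum = 0 := by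
  rw [← phi_msum hn]
  have hconst : ∀ w ∈ B.map (ZMod.castHom (show p ∣ n from Dvd.intro q hn.symm) (ZMod p)), w = c := by
    intro w hw
    obtain ⟨b, hb, rfl⟩ := Multiset.mem_map.mp hw
    exact hall b hb
  rw [const_sum_multiset hconst, Multiset.card_map, hcard, nsmul_eq_mul, ZMod.natCast_self,
    zero_mul]

lemma purity {p q n : ℕ} (hp : p.Prime) (hq : 2 ≤ q) (hn : n = p * q)
    {x y : ZMod p} (hxy : x ≠ y)
    {B : Multiset (ZMod n)}
    (hcls : ∀ b ∈ B, ZMod.castHom (show p ∣ n from Dvd.intro q hn.symm) (ZMod p) b = x ∨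
      ZMod.castHom (show p ∣ n from Dvd.intro q hn.symm) (ZMod p) b = y)
    (hcard : Multiset.card B = p)
    (hsum : ZMod.castHom (show p ∣ n from Dvd.intro q hn.symm) (ZMod p) B.sum = 0) :
    (∀ b ∈ B, ZMod.castHom (show p ∣ n from Dvd.intro q hn.symm) (ZMod p) b = x) ∨
    (∀ b ∈ B, ZMod.castHom (show p ∣ n from Dvd.intro q hn.symm) (ZMod p) b = y) := by
  haveI : Fact p.Prime := ⟨hp⟩
  set φ := ZMod.castHom (show p ∣ n from Dvd.intro q hn.symm) (ZMod p) with hφ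
  set Bφ := B.map φ with hBφ
  have hcardφ : Multiset.card Bφ = p := by rw [hBφ, Multiset.card_map, hcard]
  have hallφ : ∀ w ∈ Bφ, w = x ∨ w = y := by
    intro w hw
    obtain ⟨b, hb, rfl⟩ := Multiset.mem_map.mp hw
    exact hcls b hb
  have hcnt : Multiset.count x Bφ + Multiset.count y Bφ = p := by
    rw [count_two_of_all hxy hallφ, hcardφ]
  have hdecomp := two_val_multiset hxy (by rw [count_two_of_all hxy hallφ])
  have hsumφ : Bφ.sum = 0 := by rw [hBφ, phi_msum hn, hsum]
  rw [hdecomp, Multiset.sum_add, Multiset.sum_replicate, Multiset.sum_replicate] at hsumφ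
  set i := Multiset.count x Bφ with hi
  have hile : i ≤ p := by omega
  -- i • x + (p - i) • y = 0 → (i : ZMod p) * (x - y) = 0
  have hcast : ((p - i : ℕ) : ZMod p) = -(i : ZMod p) := by
    rw [Nat.cast_sub hile, ZMod.natCast_self]
    ring
  have hz : (i : ZMod p) * (x - y) = 0 := by
    have : Multiset.count y Bφ = p - i := by omega
    rw [this] at hsumφ
    rw [nsmul_eq_mul, nsmul_eq_mul, hcast] at hsumφ
    linear_combination hsumφ
  have hdvd : (i : ZMod p) = 0 := by
    rcases mul_eq_zero.mp hz with h | h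
    · exact h
    · exact absurd (by linear_combination h) hxy
  have : p ∣ i := (ZMod.natCast_eq_zero_iff i p).mp hdvd
  have hi0p : i = 0 ∨ i = p := by
    obtain ⟨c, hc⟩ := this
    rcases Nat.eq_zero_or_pos c with rfl | hcpos
    · left; omega
    · right
      have h1 := Multiset.count_le_card x Bφ
      rw [hcardφ] at h1
      have := hp.pos
      nlinarith
  rcases hi0p with hi0 | hip
  · right
    intro b hb
    rcases hcls b hb with hbx | hby
    · exfalso
      have : φ b ∈ Bφ := Multiset.mem_map_of_mem φ hb
      rw [hbx] at this
      have := Multiset.count_pos.mpr this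
      omega
    · exact hby
  · left
    intro b hb
    have := all_eq_multiset (s := Bφ) (a := x) (by omega)
    exact this (φ b) (Multiset.mem_map_of_mem φ hb)

lemma filter_sum_blocks {p n : ℕ} (hp : p.Prime)
    (P : ZMod n → Prop) [DecidablePred P] :
    ∀ (C : Multiset (Multiset (ZMod n))),
    (∀ B ∈ C, Multiset.card (B.filter P) = p ∨ Multiset.card (B.filter P) = 0) →
    ∃ k ≤ Multiset.card C, Multiset.card (C.sum.filter P) = p * k := by
  intro C
  induction C using Multiset.induction with
  | empty => exact fun _ => ⟨0, by simp, by simp⟩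
  | cons B C ih =>
    intro h
    obtain ⟨k, hk, hkeq⟩ := ih (fun B' hB' => h B' (Multiset.mem_cons_of_mem hB'))
    rw [Multiset.sum_cons]
    rcases h B (Multiset.mem_cons_self _ _) with hB | hB
    · refine ⟨k + 1, by simp; omega, ?_⟩
      rw [Multiset.filter_add, Multiset.card_add, hB, hkeq]
      ring
    · refine ⟨k, by simp; omega, ?_⟩
      rw [Multiset.filter_add, Multiset.card_add, hB, hkeq]
      omega

lemma swap_lemma {p q n : ℕ} (hp : p.Prime) (hq : 2 ≤ q) (hn : n = p * q)
    {S : Multiset (ZMod n)}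
    (h0 : ¬ ∃ T ≤ S, Multiset.card T = n ∧ T.sum = 0)
    (IHq : ∀ (S' : Multiset (ZMod q)), Multiset.card S' = 2*q-2 →
      (¬ ∃ T ≤ S', Multiset.card T = q ∧ T.sum = 0) →
      ∃ a b, S' = Multiset.replicate (q-1) a + Multiset.replicate (q-1) b ∧
        addOrderOf (a - b) = q)
    {X Y : Multiset (ZMod n)} {x y : ZMod p} (hXY : X + Y = S)
    (hXcl : ∀ s ∈ X, ZMod.castHom (show p ∣ n from Dvd.intro q hn.symm) (ZMod p) s = x)
    (hYcl : ∀ s ∈ Y, ZMod.castHom (show p ∣ n from Dvd.intro q hn.symm) (ZMod p) s = y)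
    {ax ay : ℕ} (hcx : Multiset.card X = p * ax + (p-1))
    (hcy : Multiset.card Y = p * ay + (p-1))
    (hax : 1 ≤ ax) (haq : ax + ay = 2*q - 2) :
    ∀ u ∈ X, ∀ v ∈ X, u = v := by
  intro u hu v hv
  by_contra huv
  have hp2 : 2 ≤ p := hp.two_le
  have hpax : p ≤ p * ax := Nat.le_mul_of_pos_right p (by omega)
  have hvX' : v ∈ X.erase u := (Multiset.mem_erase_of_ne (fun h => huv h.symm)).mpr hv
  obtain ⟨D, hD⟩ : ∃ D, (X.erase u).erase v = D := ⟨_, rfl⟩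
  have hXdec : X = u ::ₘ v ::ₘ D := by
    rw [← hD, Multiset.cons_erase hvX', Multiset.cons_erase hu]
  have hcD : Multiset.card D = p * ax + p - 3 := by
    have := congrArg Multiset.card hXdec
    simp only [Multiset.card_cons] at this
    omega
  obtain ⟨Z, hZle, hZcard⟩ := exists_le_card (W := D) (k := p-1) (by omega)
  obtain ⟨X2, hX2⟩ : ∃ A, D - Z = A := ⟨_, rfl⟩
  have hX2split : Z + X2 = D := by rw [← hX2]; exact add_tsub_cancel_of_le hZle
  have hcX2 : Multiset.card X2 = p * ax - 2 := by
    have := congrArg Multiset.card hX2split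
    rw [Multiset.card_add] at this
    omega
  obtain ⟨V, hVle, hVcard⟩ := exists_le_card (W := X2) (k := p-2) (by omega)
  obtain ⟨W, hW⟩ : ∃ A, X2 - V = A := ⟨_, rfl⟩
  have hWsplit : V + W = X2 := by rw [← hW]; exact add_tsub_cancel_of_le hVle
  have hWcard : Multiset.card W = p * (ax - 1) := by
    have := congrArg Multiset.card hWsplit
    rw [Multiset.card_add] at this
    have hmul : p * (ax - 1) = p * ax - p := by
      rw [Nat.mul_sub, Nat.mul_one]
    omega
  obtain ⟨CX, hCXcard, hCXb, hCXsum⟩ := exists_partition hp.pos hWcard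
  -- Y side
  obtain ⟨LY, hLYle, hLYcard⟩ := exists_le_card (W := Y) (k := p-1) (by omega)
  obtain ⟨WY, hWY⟩ : ∃ A, Y - LY = A := ⟨_, rfl⟩
  have hYsplit : LY + WY = Y := by rw [← hWY]; exact add_tsub_cancel_of_le hLYle
  have hWYcard : Multiset.card WY = p * ay := by
    have := congrArg Multiset.card hYsplit
    rw [Multiset.card_add] at this
    omega
  obtain ⟨CY, hCYcard, hCYb, hCYsum⟩ := exists_partition hp.pos hWYcard
  -- membership chains
  have hDX : ∀ b ∈ D, b ∈ X := by
    intro b hb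
    rw [hXdec]
    exact Multiset.mem_cons_of_mem (Multiset.mem_cons_of_mem hb)
  have hZX : ∀ b ∈ Z, b ∈ X := fun b hb => hDX b (Multiset.mem_of_le hZle hb)
  have hVX : ∀ b ∈ V, b ∈ X := by
    intro b hb
    apply hDX
    have h1 : b ∈ X2 := Multiset.mem_of_le hVle hb
    rw [← hX2split]
    exact Multiset.mem_add.mpr (Or.inr h1)
  have hWX : ∀ b ∈ W, b ∈ X := by
    intro b hb
    apply hDX
    rw [← hX2split]
    refine Multiset.mem_add.mpr (Or.inr ?_)
    rw [← hWsplit]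
    exact Multiset.mem_add.mpr (Or.inr hb)
  have hCXmem : ∀ B ∈ CX, ∀ b ∈ B, b ∈ X := by
    intro B hB b hb
    exact hWX b (by rw [← hCXsum]; exact mem_sum_iff.mpr ⟨B, hB, hb⟩)
  have hCYmem : ∀ B ∈ CY, ∀ b ∈ B, b ∈ Y := by
    intro B hB b hb
    have : b ∈ WY := by rw [← hCYsum]; exact mem_sum_iff.mpr ⟨B, hB, hb⟩
    rw [← hYsplit]
    exact Multiset.mem_add.mpr (Or.inr this)
  -- the two configurations
  have mkconfig : ∀ w, w ∈ X → ∀ w', w' ∈ X →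
      X = w ::ₘ w' ::ₘ D →
      IsConfig hn S ((w ::ₘ Z) ::ₘ (CX + CY)) ((w' ::ₘ V) + LY) := by
    intro w hwX w' hw'X hXdec'
    refine ⟨?_, ?_, ?_⟩
    · -- sum condition
      rw [Multiset.sum_cons, Multiset.sum_add, hCXsum, hCYsum, ← hXY, hXdec']
      rw [show (w ::ₘ w' ::ₘ D : Multiset (ZMod n)) = {w} + ({w'} + D) by
            rw [Multiset.singleton_add, Multiset.singleton_add],
          show (w ::ₘ Z : Multiset (ZMod n)) = {w} + Z from (Multiset.singleton_add w Z).symm,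
          show (w' ::ₘ V : Multiset (ZMod n)) = {w'} + V from (Multiset.singleton_add w' V).symm,
          ← hX2split, ← hWsplit, ← hYsplit]
      ext a
      simp only [Multiset.count_add]
      omega
    · rw [Multiset.card_cons, Multiset.card_add, hCXcard, hCYcard]
      omega
    · intro B hB
      rcases Multiset.mem_cons.mp hB with rfl | hB
      · constructor
        · rw [Multiset.card_cons, hZcard]
          omega
        · refine pure_block_sum (c := x) hn ?_ (by rw [Multiset.card_cons, hZcard]; omega)
          intro b hb
          rcases Multiset.mem_cons.mp hb with rfl | hb
          · exact hXcl b hwX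
          · exact hXcl b (hZX b hb)
      · rcases Multiset.mem_add.mp hB with hB | hB
        · exact ⟨hCXb B hB, pure_block_sum hn (fun b hb => hXcl b (hCXmem B hB b hb)) (hCXb B hB)⟩
        · exact ⟨hCYb B hB, pure_block_sum hn (fun b hb => hYcl b (hCYmem B hB b hb)) (hCYb B hB)⟩
  have hXdec2 : X = v ::ₘ u ::ₘ D := by
    rw [hXdec, Multiset.cons_swap]
  have hCA := mkconfig u hu v hv hXdec
  have hCB := mkconfig v hv u hu hXdec2
  -- block sums
  obtain ⟨γsA, αA, βA, hγA, hsA, hoA⟩ := blocks_struct hp hq hn h0 IHq hCA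
  obtain ⟨γsB, αB, βB, hγB, hsB, hoB⟩ := blocks_struct hp hq hn h0 IHq hCB
  have hinj := iota_injective hp.pos (by omega) hn
  have hmapA : γsA.map (iota hn) = (u + Z.sum) ::ₘ (CX + CY).map Multiset.sum := by
    rw [hγA, Multiset.map_cons, Multiset.sum_cons]
  have hmapB : γsB.map (iota hn) = (v + Z.sum) ::ₘ (CX + CY).map Multiset.sum := by
    rw [hγB, Multiset.map_cons, Multiset.sum_cons]
  have hγ₀ : u + Z.sum ∈ γsA.map (iota hn) := by
    rw [hmapA]; exact Multiset.mem_cons_self _ _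
  obtain ⟨γ₀, hγ₀m, hγ₀e⟩ := Multiset.mem_map.mp hγ₀
  have hγ₁ : v + Z.sum ∈ γsB.map (iota hn) := by
    rw [hmapB]; exact Multiset.mem_cons_self _ _
  obtain ⟨γ₁, hγ₁m, hγ₁e⟩ := Multiset.mem_map.mp hγ₁
  have hrA : (γsA.erase γ₀).map (iota hn) = (CX + CY).map Multiset.sum := by
    rw [Multiset.map_erase _ hinj, hmapA, hγ₀e, Multiset.erase_cons_head]
  have hrB : (γsB.erase γ₁).map (iota hn) = (CX + CY).map Multiset.sum := by
    rw [Multiset.map_erase _ hinj, hmapB, hγ₁e, Multiset.erase_cons_head]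
  have hrAB : γsA.erase γ₀ = γsB.erase γ₁ := by
    apply Multiset.map_injective hinj
    rw [hrA, hrB]
  have hA' : γ₀ ::ₘ (γsA.erase γ₀)
      = Multiset.replicate (q-1) αA + Multiset.replicate (q-1) βA := by
    rw [Multiset.cons_erase hγ₀m, hsA]
  have hB' : γ₁ ::ₘ (γsA.erase γ₀)
      = Multiset.replicate (q-1) αB + Multiset.replicate (q-1) βB := by
    rw [hrAB, Multiset.cons_erase hγ₁m, hsB]
  have hγeq := RIG hq hA' hoA hB' hoB
  apply huv
  have hιeq : iota hn γ₀ = iota hn γ₁ := by rw [hγeq]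
  rw [hγ₀e, hγ₁e] at hιeq
  exact add_right_cancel hιeq


-- the all-one-class contradiction
lemma one_class_contra {p q n : ℕ} (hp : p.Prime) (hq : 2 ≤ q) (hn : n = p * q)
    {S : Multiset (ZMod n)}
    (h0 : ¬ ∃ T ≤ S, Multiset.card T = n ∧ T.sum = 0)
    (IHq : ∀ (S' : Multiset (ZMod q)), Multiset.card S' = 2*q-2 →
      (¬ ∃ T ≤ S', Multiset.card T = q ∧ T.sum = 0) →
      ∃ a b, S' = Multiset.replicate (q-1) a + Multiset.replicate (q-1) b ∧
        addOrderOf (a - b) = q)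
    {X Y : Multiset (ZMod n)} (hXY : X + Y = S)
    (hXcard : Multiset.card X = p - 1)
    (hYcard : Multiset.card Y = p * (2*q-2) + (p-1))
    (hYconst : ∀ u ∈ Y, ∀ v ∈ Y, u = v)
    {c : ZMod p}
    (hYcl : ∀ s ∈ Y, ZMod.castHom (show p ∣ n from Dvd.intro q hn.symm) (ZMod p) s = c) :
    False := by
  have hp2 : 2 ≤ p := hp.two_le
  have hYne : ∃ h₀, h₀ ∈ Y := by
    rw [← Multiset.card_pos_iff_exists_mem]
    omega
  obtain ⟨h₀, hh₀⟩ := hYne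
  obtain ⟨LY, hLYle, hLYcard⟩ := exists_le_card (W := Y) (k := p-1) (by omega)
  obtain ⟨WY, hWY⟩ : ∃ A, Y - LY = A := ⟨_, rfl⟩
  have hYsplit : LY + WY = Y := by rw [← hWY]; exact add_tsub_cancel_of_le hLYle
  have hWYcard : Multiset.card WY = p * (2*q-2) := by
    have := congrArg Multiset.card hYsplit
    rw [Multiset.card_add] at this
    omega
  obtain ⟨CY, hCYcard, hCYb, hCYsum⟩ := exists_partition hp.pos hWYcard
  have hCYmem : ∀ B ∈ CY, ∀ b ∈ B, b ∈ Y := by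
    intro B hB b hb
    have hbW : b ∈ WY := by rw [← hCYsum]; exact mem_sum_iff.mpr ⟨B, hB, hb⟩
    rw [← hYsplit]
    exact Multiset.mem_add.mpr (Or.inr hbW)
  have hconf : IsConfig hn S CY (X + LY) := by
    refine ⟨?_, hCYcard, ?_⟩
    · rw [hCYsum, ← hXY, ← hYsplit]
      ext a
      simp only [Multiset.count_add]
      omega
    · intro B hB
      exact ⟨hCYb B hB, pure_block_sum hn (fun b hb => hYcl b (hCYmem B hB b hb)) (hCYb B hB)⟩
  obtain ⟨γs, α, β, hγ, hshape, hord⟩ := blocks_struct hp hq hn h0 IHq hconf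
  have hαβ : α ≠ β := by
    intro h
    rw [h, sub_self, addOrderOf_zero] at hord
    omega
  have hblocksum : ∀ e ∈ CY.map Multiset.sum, e = p • h₀ := by
    intro e he
    obtain ⟨B, hB, rfl⟩ := Multiset.mem_map.mp he
    have hconst : ∀ b ∈ B, b = h₀ := fun b hb => hYconst b (hCYmem B hB b hb) h₀ hh₀
    rw [const_sum_multiset hconst, hCYb B hB]
  have hq1 : 1 ≤ q - 1 := by omega
  have hαmem : α ∈ γs := by
    rw [hshape]
    exact Multiset.mem_add.mpr (Or.inl (Multiset.mem_replicate.mpr ⟨by omega, rfl⟩))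
  have hβmem : β ∈ γs := by
    rw [hshape]
    exact Multiset.mem_add.mpr (Or.inr (Multiset.mem_replicate.mpr ⟨by omega, rfl⟩))
  have hα : iota hn α = p • h₀ :=
    hblocksum _ (by rw [← hγ]; exact Multiset.mem_map_of_mem _ hαmem)
  have hβ : iota hn β = p • h₀ :=
    hblocksum _ (by rw [← hγ]; exact Multiset.mem_map_of_mem _ hβmem)
  exact hαβ (iota_injective hp.pos (by omega) hn (by rw [hα, hβ]))

theorem composite_case {p q n : ℕ} (hp : p.Prime) (hq : 2 ≤ q) (hn : n = p * q)
    {S : Multiset (ZMod n)} (hS : Multiset.card S = 2*n - 2)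
    (h0 : ¬ ∃ T ≤ S, Multiset.card T = n ∧ T.sum = 0)
    (IHp : ∀ (S' : Multiset (ZMod p)), Multiset.card S' = 2*p-2 →
      (¬ ∃ T ≤ S', Multiset.card T = p ∧ T.sum = 0) →
      ∃ x y, S' = Multiset.replicate (p-1) x + Multiset.replicate (p-1) y ∧
        addOrderOf (x - y) = p)
    (IHq : ∀ (S' : Multiset (ZMod q)), Multiset.card S' = 2*q-2 →
      (¬ ∃ T ≤ S', Multiset.card T = q ∧ T.sum = 0) →
      ∃ a b, S' = Multiset.replicate (q-1) a + Multiset.replicate (q-1) b ∧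
        addOrderOf (a - b) = q) :
    ∃ g h : ZMod n, S = Multiset.replicate (n-1) g + Multiset.replicate (n-1) h := by
  classical
  have hp2 : 2 ≤ p := hp.two_le
  obtain ⟨C0, L0, hC0⟩ := config_exists hp hq hn hS
  obtain ⟨x, y, hL0, hxy⟩ := leftover_struct hp hq hn hS h0 IHp hC0
  have hcls := junk_free hp hq hn hS h0 IHp hC0 hL0 hxy
  obtain ⟨hC0sum, hC0card, hC0B⟩ := hC0
  set X := S.filter (fun s =>
    ZMod.castHom (show p ∣ n from Dvd.intro q hn.symm) (ZMod p) s = x) with hXdef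
  set Y := S.filter (fun s =>
    ¬ ZMod.castHom (show p ∣ n from Dvd.intro q hn.symm) (ZMod p) s = x) with hYdef
  have hXY : X + Y = S := Multiset.filter_add_not _ S
  have hXcl : ∀ s ∈ X,
      ZMod.castHom (show p ∣ n from Dvd.intro q hn.symm) (ZMod p) s = x := by
    intro s hs
    rw [hXdef] at hs
    exact (Multiset.mem_filter.mp hs).2
  have hYcl : ∀ s ∈ Y,
      ZMod.castHom (show p ∣ n from Dvd.intro q hn.symm) (ZMod p) s = y := by
    intro s hs
    rw [hYdef] at hs
    have h1 := (Multiset.mem_filter.mp hs).2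
    have h2 := hcls s (Multiset.mem_filter.mp hs).1
    tauto
  -- purity of each block, and count of X
  have hpure : ∀ B ∈ C0, Multiset.card (B.filter (fun s =>
      ZMod.castHom (show p ∣ n from Dvd.intro q hn.symm) (ZMod p) s = x)) = p ∨
      Multiset.card (B.filter (fun s =>
      ZMod.castHom (show p ∣ n from Dvd.intro q hn.symm) (ZMod p) s = x)) = 0 := by
    intro B hB
    have hBS : ∀ b ∈ B, b ∈ S := by
      intro b hb
      rw [← hC0sum]
      exact Multiset.mem_add.mpr (Or.inl (mem_sum_iff.mpr ⟨B, hB, hb⟩))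
    rcases purity hp hq hn hxy (fun b hb => hcls b (hBS b hb)) (hC0B B hB).1 (hC0B B hB).2
      with hall | hall
    · left
      rw [Multiset.filter_eq_self.mpr hall, (hC0B B hB).1]
    · right
      rw [Multiset.card_eq_zero, Multiset.filter_eq_nil]
      intro b hb
      rw [hall b hb]
      exact fun h => hxy h.symm
  obtain ⟨ax, haxle, haxeq⟩ := filter_sum_blocks hp _ C0 hpure
  have hcountL0 : Multiset.card (L0.filter (fun s =>
      ZMod.castHom (show p ∣ n from Dvd.intro q hn.symm) (ZMod p) s = x)) = p - 1 := by
    have h1 := Multiset.count_map (ZMod.castHom (show p ∣ n from Dvd.intro q hn.symm) (ZMod p)) L0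
      (b := x)
    have h2 : L0.filter (fun s => x =
        ZMod.castHom (show p ∣ n from Dvd.intro q hn.symm) (ZMod p) s) = L0.filter (fun s =>
        ZMod.castHom (show p ∣ n from Dvd.intro q hn.symm) (ZMod p) s = x) := by
      apply Multiset.filter_congr
      intro s _
      exact eq_comm
    have h3 : Multiset.count x (L0.map
        (ZMod.castHom (show p ∣ n from Dvd.intro q hn.symm) (ZMod p))) = p - 1 := by
      rw [hL0, Multiset.count_add, Multiset.count_replicate_self, count_replicate_ne hxy]
      omega
    rw [h1, h2] at h3
    exact h3
  have hcx : Multiset.card X = p * ax + (p-1) := by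
    rw [hXdef, ← hC0sum, Multiset.filter_add, Multiset.card_add, haxeq, hcountL0]
  have hax2q : ax ≤ 2*q - 2 := le_trans haxle (le_of_eq hC0card)
  have htot : Multiset.card X + Multiset.card Y = 2*n - 2 := by
    rw [← Multiset.card_add, hXY, hS]
  have he1 : p*(2*q-2) + p*2 = p*(2*q) := by
    rw [← Nat.mul_add]
    congr 1
    omega
  have he2 : p*(2*q) = 2*n := by rw [hn]; ring
  have he3 : p*(2*q-2-ax) + p*ax = p*(2*q-2) := by
    rw [← Nat.mul_add]
    congr 1
    omega
  have hcy : Multiset.card Y = p * (2*q-2-ax) + (p-1) := by omega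
  have haq : ax + (2*q-2-ax) = 2*q-2 := by omega
  by_cases hax0 : ax = 0
  · exfalso
    have hay1 : 1 ≤ 2*q-2-ax := by omega
    have hYconst : ∀ u ∈ Y, ∀ v ∈ Y, u = v :=
      swap_lemma hp hq hn h0 IHq (by rw [add_comm]; exact hXY) hYcl hXcl hcy hcx hay1 (by omega)
    have h00 : p * ax = 0 := by simp [hax0]
    have h01 : 2*q-2-ax = 2*q-2 := by omega
    rw [h01] at hcy
    refine one_class_contra hp hq hn h0 IHq hXY (by omega) (by omega) hYconst hYcl
  · by_cases hay0 : 2*q-2-ax = 0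
    · exfalso
      have hXconst : ∀ u ∈ X, ∀ v ∈ X, u = v :=
        swap_lemma hp hq hn h0 IHq hXY hXcl hYcl hcx hcy (by omega) haq
      have h02 : p * (2*q-2-ax) = 0 := by simp [hay0]
      have h03 : ax = 2*q-2 := by omega
      rw [h03] at hcx
      refine one_class_contra hp hq hn h0 IHq (show Y + X = S by rw [add_comm]; exact hXY)
        (by omega) (by omega) hXconst hXcl
    · have hXconst : ∀ u ∈ X, ∀ v ∈ X, u = v :=
        swap_lemma hp hq hn h0 IHq hXY hXcl hYcl hcx hcy (by omega) haq
      have hYconst : ∀ u ∈ Y, ∀ v ∈ Y, u = v :=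
        swap_lemma hp hq hn h0 IHq (by rw [add_comm]; exact hXY) hYcl hXcl hcy hcx (by omega)
          (by omega)
      have hXne : ∃ g, g ∈ X := by
        rw [← Multiset.card_pos_iff_exists_mem]
        omega
      have hYne : ∃ h, h ∈ Y := by
        rw [← Multiset.card_pos_iff_exists_mem]
        omega
      obtain ⟨g, hg⟩ := hXne
      obtain ⟨h, hh⟩ := hYne
      have hXrep : X = Multiset.replicate (Multiset.card X) g :=
        Multiset.eq_replicate.mpr ⟨rfl, fun b hb => hXconst b hb g hg⟩
      have hYrep : Y = Multiset.replicate (Multiset.card Y) h :=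
        Multiset.eq_replicate.mpr ⟨rfl, fun b hb => hYconst b hb h hh⟩
      have hn4 : 4 ≤ n := by
        rw [hn]
        nlinarith
      have hcxle : Multiset.card X ≤ n - 1 := by
        by_contra hlt
        push_neg at hlt
        apply h0
        refine ⟨Multiset.replicate n g, ?_, by simp, ?_⟩
        · calc Multiset.replicate n g ≤ Multiset.replicate (Multiset.card X) g :=
              (Multiset.replicate_le_replicate g).mpr (by omega)
            _ = X := hXrep.symm
            _ ≤ S := by rw [← hXY]; exact Multiset.le_add_right _ _
        · rw [Multiset.sum_replicate]
          exact zmod_nsmul_self _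
      have hcyle : Multiset.card Y ≤ n - 1 := by
        by_contra hlt
        push_neg at hlt
        apply h0
        refine ⟨Multiset.replicate n h, ?_, by simp, ?_⟩
        · calc Multiset.replicate n h ≤ Multiset.replicate (Multiset.card Y) h :=
              (Multiset.replicate_le_replicate h).mpr (by omega)
            _ = Y := hYrep.symm
            _ ≤ S := by rw [← hXY]; exact Multiset.le_add_left _ _
        · rw [Multiset.sum_replicate]
          exact zmod_nsmul_self _
      refine ⟨g, h, ?_⟩
      have hcxv : Multiset.card X = n - 1 := by omega
      have hcyv : Multiset.card Y = n - 1 := by omega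
      rw [← hXY, hXrep, hYrep, hcxv, hcyv]


lemma case2 (S : Multiset (ZMod 2)) (hS : Multiset.card S = 2*2-2) :
    ∃ g h : ZMod 2, S = Multiset.replicate (2-1) g + Multiset.replicate (2-1) h := by
  have hc : Multiset.card S = 2 := by omega
  obtain ⟨a, b, hab⟩ := Multiset.card_eq_two.mp hc
  refine ⟨a, b, ?_⟩
  rw [hab]
  rfl

lemma case3 (S : Multiset (ZMod 3)) (hS : Multiset.card S = 2*3-2)
    (h0 : ¬ ∃ T ≤ S, Multiset.card T = 3 ∧ T.sum = 0) :
    ∃ g h : ZMod 3, S = Multiset.replicate (3-1) g + Multiset.replicate (3-1) h := by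
  have hcnt : ∀ a : ZMod 3, S.count a ≤ 2 := by
    intro a
    by_contra h
    push_neg at h
    apply h0
    refine ⟨Multiset.replicate 3 a, Multiset.le_count_iff_replicate_le.mp (by omega), by simp, ?_⟩
    rw [Multiset.sum_replicate]
    exact zmod_nsmul_self a
  have hno3 : ∀ a b c : ZMod 3, a ∈ S → b ∈ S → c ∈ S → a ≠ b → a ≠ c → b ≠ c → False := by
    intro a b c ha hb hc hab hac hbc
    apply h0
    have hbea : b ∈ S.erase a := (Multiset.mem_erase_of_ne (Ne.symm hab)).mpr hb
    have hceab : c ∈ (S.erase a).erase b :=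
      (Multiset.mem_erase_of_ne (Ne.symm hbc)).mpr ((Multiset.mem_erase_of_ne (Ne.symm hac)).mpr hc)
    refine ⟨a ::ₘ b ::ₘ c ::ₘ 0, ?_, by simp, ?_⟩
    · calc a ::ₘ b ::ₘ c ::ₘ 0 ≤ a ::ₘ b ::ₘ ((S.erase a).erase b) := by
            refine Multiset.cons_le_cons a (Multiset.cons_le_cons b ?_)
            rw [show (c ::ₘ (0 : Multiset (ZMod 3))) = {c} from rfl, Multiset.singleton_le]
            exact hceab
        _ = S := by rw [Multiset.cons_erase hbea, Multiset.cons_erase ha]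
    · have hsum3 : ∀ a b c : ZMod 3, a ≠ b → a ≠ c → b ≠ c → a + b + c = 0 := by decide
      simp only [Multiset.sum_cons, Multiset.sum_zero, add_zero]
      rw [← add_assoc]
      exact hsum3 a b c hab hac hbc
  have hSne : ∃ a, a ∈ S := by
    rw [← Multiset.card_pos_iff_exists_mem]
    omega
  obtain ⟨a, ha⟩ := hSne
  have hb : ∃ b ∈ S, b ≠ a := by
    by_contra hcon
    push_neg at hcon
    have : ∀ w, Multiset.count w S ≤ Multiset.count w (Multiset.replicate 2 a) := by
      intro w
      by_cases hwa : w = a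
      · rw [hwa, Multiset.count_replicate_self]
        exact hcnt a
      · rw [Multiset.count_eq_zero.mpr (fun hw => hwa (hcon w hw))]
        omega
    have := Multiset.card_le_card (Multiset.le_iff_count.mpr this)
    rw [Multiset.card_replicate] at this
    omega
  obtain ⟨b, hbS, hba⟩ := hb
  have hball : ∀ c ∈ S, c = a ∨ c = b := by
    intro c hc
    by_contra hcon
    push_neg at hcon
    exact hno3 a b c ha hbS hc (Ne.symm hba) (Ne.symm hcon.1) (Ne.symm hcon.2)
  have hab : a ≠ b := Ne.symm hba
  have hcc := count_two_of_all hab hball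
  have hca := hcnt a
  have hcb := hcnt b
  have hca2 : Multiset.count a S = 2 := by omega
  have hcb2 : Multiset.count b S = 2 := by omega
  have := two_val_multiset hab hcc
  rw [hca2, hcb2] at this
  exact ⟨a, b, this⟩

theorem master : ∀ n : ℕ, 2 ≤ n → ∀ S : Multiset (ZMod n), Multiset.card S = 2*n-2 →
    (¬ ∃ T ≤ S, Multiset.card T = n ∧ T.sum = 0) →
    ∃ g h : ZMod n, S = Multiset.replicate (n-1) g + Multiset.replicate (n-1) h ∧
      addOrderOf (g - h) = n := by
  intro n
  induction n using Nat.strong_induction_on with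
  | _ n IH =>
    intro hn2 S hS h0
    suffices hstr : ∃ g h : ZMod n,
        S = Multiset.replicate (n-1) g + Multiset.replicate (n-1) h by
      obtain ⟨g, h, hgh⟩ := hstr
      refine ⟨g, h, hgh, endgame hn2 g h ?_⟩
      rw [← hgh]
      exact h0
    by_cases hprime : n.Prime
    · rcases Nat.lt_or_ge n 5 with hlt | hge
      · interval_cases n
        · exact case2 S hS
        · exact case3 S hS h0
        · exact absurd hprime (by decide)
      · exact prime_case hprime hge hS h0
    · obtain ⟨p, hpp, hpd⟩ := Nat.exists_prime_and_dvd (show n ≠ 1 by omega)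
      obtain ⟨q, hq⟩ := hpd
      have hp2 := hpp.two_le
      have hq2 : 2 ≤ q := by
        by_contra hcon
        push_neg at hcon
        interval_cases q
        · omega
        · apply hprime
          have : n = p := by omega
          rw [this]
          exact hpp
      have hplt : p < n := by
        rw [hq]
        nlinarith
      have hqlt : q < n := by
        rw [hq]
        nlinarith
      exact composite_case hpp hq2 hq hS h0
        (fun S' h1 h2 => IH p hplt hp2 S' h1 h2)
        (fun S' h1 h2 => IH q hqlt hq2 S' h1 h2)


end EGZProofAux

theorem stmt_7 {G : Type*} [AddCommGroup G] [Fintype G] [IsAddCyclic G]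
    (n : ℕ) (hn : 2 ≤ n) (hG : Fintype.card G = n)
    (S : Multiset G) (hS : Multiset.card S = 2 * n - 2)
    (h0 : ¬ ∃ T ≤ S, Multiset.card T = n ∧ T.sum = 0) :
    ∃ g h : G, S = Multiset.replicate (n - 1) g + Multiset.replicate (n - 1) h ∧
      addOrderOf (g - h) = n := by
  classical
  have hcard : Nat.card G = n := by rw [Nat.card_eq_fintype_card, hG]
  have e0 : ZMod (Nat.card G) ≃+ G := zmodAddCyclicAddEquiv inferInstance
  have e : ZMod n ≃+ G := hcard ▸ e0
  have hid : ∀ (M : Multiset G), (M.map ⇑e.symm).map ⇑e = M := by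
    intro M
    rw [Multiset.map_map]
    rw [show (⇑e ∘ ⇑e.symm) = id from funext (fun x => e.apply_symm_apply x), Multiset.map_id]
  have h0' : ¬ ∃ T ≤ S.map ⇑e.symm, Multiset.card T = n ∧ T.sum = 0 := by
    rintro ⟨T', hT'le, hT'card, hT'sum⟩
    apply h0
    refine ⟨T'.map ⇑e, ?_, by rw [Multiset.card_map, hT'card], ?_⟩
    · have h1 := Multiset.map_le_map (f := ⇑e) hT'le
      rwa [hid] at h1
    · rw [← map_multiset_sum e T', hT'sum]
      exact map_zero e
  obtain ⟨g', h', hstruct, hord⟩ := EGZProofAux.master n hn (S.map ⇑e.symm)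
    (by rw [Multiset.card_map, hS]) h0'
  refine ⟨e g', e h', ?_, ?_⟩
  · have h2 := congrArg (Multiset.map ⇑e) hstruct
    rw [hid, Multiset.map_add, Multiset.map_replicate, Multiset.map_replicate] at h2
    exact h2
  · have h3 := addOrderOf_injective e.toAddMonoidHom e.injective (g' - h')
    rw [AddEquiv.coe_toAddMonoidHom] at h3
    rw [show e g' - e h' = e (g' - h') from (map_sub e g' h').symm, h3, hord]
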